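/- arXiv:2407.00957 — 5 statements merged into one kernel-verified Lean document; each statement's English description precedes it below -/
import Mathlib

section
/- The ReLU is a γ-parameter bounding activation for every γ > 0: for every γ > 0, every natural numbers d, l ≥ 1, every compact set U ⊆ ℝ^d, every continuous function h : ℝ^d → ℝ^l, and every ε > 0, there exist n ∈ ℕ and parameters A ∈ ℝ^{l×n}, B ∈ ℝ^{n×d}, b ∈ ℝ^n with every individual entry of A, B, and b lying in the interval [−γ, γ], such that ∫_U ‖h(x) − A·ReLU(Bx + b)‖ dx ≤ ε, where the integral is with respect to Lebesgue measure on ℝ^d. -/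
open MeasureTheory

/-- The ReLU activation function. -/
noncomputable def relu (t : ℝ) : ℝ := max t 0



lemma relu_of_nonneg {t : ℝ} (ht : 0 ≤ t) : relu t = t := max_eq_left ht
lemma relu_of_nonpos {t : ℝ} (ht : t ≤ 0) : relu t = 0 := max_eq_right ht

lemma pl_approx (g : ℝ → ℝ) (hg : Continuous g) (M : ℝ) (hM : 0 < M) (ε : ℝ) (hε : 0 < ε) :
    ∃ (m : ℕ) (s τ : ℕ → ℝ),
      ∀ t ∈ Set.Icc (-M) M,
        |g t - (g (-M) + ∑ i ∈ Finset.range m,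
            s i * (relu (t - τ i) - relu (t - τ (i+1))))| ≤ ε := by
  obtain ⟨δ, hδ, hδg⟩ := Metric.uniformContinuousOn_iff.mp
    ((isCompact_Icc (a := -M) (b := M)).uniformContinuousOn_of_continuous hg.continuousOn)
    (ε/2) (by linarith)
  obtain ⟨m, hm⟩ := exists_nat_gt (2*M/δ)
  have hm0 : 0 < (m:ℝ) := lt_trans (by positivity) hm
  set Δ : ℝ := 2*M/m with hΔdef
  have hΔ : 0 < Δ := by positivity
  have hΔδ : Δ < δ := by
    rw [hΔdef, div_lt_iff₀ hm0]
    calc 2*M = (2*M/δ) * δ := by field_simp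
    _ < m * δ := mul_lt_mul_of_pos_right hm hδ
    _ = δ * m := mul_comm _ _
  set τ : ℕ → ℝ := fun i => -M + i * Δ with hτdef
  have hτmono : ∀ i j : ℕ, i ≤ j → τ i ≤ τ j := by
    intro i j hij
    simp only [hτdef]
    have : (i:ℝ) ≤ j := Nat.cast_le.mpr hij
    nlinarith
  have hτsucc : ∀ i : ℕ, τ (i+1) = τ i + Δ := by
    intro i; simp only [hτdef]; push_cast; ring
  have hτ0 : τ 0 = -M := by simp [hτdef]
  have hτm : τ m = M := by
    simp only [hτdef, hΔdef]; field_simp; ring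
  have hτmem : ∀ i ≤ m, τ i ∈ Set.Icc (-M) M := by
    intro i hi
    constructor
    · rw [← hτ0]; exact hτmono 0 i (Nat.zero_le _)
    · rw [← hτm]; exact hτmono i m hi
  set s : ℕ → ℝ := fun i => (g (τ (i+1)) - g (τ i)) / Δ with hsdef
  refine ⟨m, s, τ, ?_⟩
  intro t ht
  obtain ⟨ht1, ht2⟩ := ht
  -- choose the interval index j
  set j : ℕ := min (m-1) ⌊(t + M)/Δ⌋₊ with hjdef
  have hm1 : 1 ≤ m := by
    by_contra hc
    push_neg at hc
    interval_cases m
    simp at hm0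
  have hjm : j + 1 ≤ m := by
    have : j ≤ m - 1 := min_le_left _ _
    omega
  have htM : 0 ≤ t + M := by linarith
  have hτjt : τ j ≤ t := by
    have h1 : (j:ℝ) ≤ (t+M)/Δ := by
      calc (j:ℝ) ≤ (⌊(t + M)/Δ⌋₊ : ℝ) := Nat.cast_le.mpr (min_le_right _ _)
      _ ≤ (t+M)/Δ := Nat.floor_le (by positivity)
    have : (j:ℝ) * Δ ≤ t + M := by
      rw [← le_div_iff₀ hΔ] at *; exact h1
    simp only [hτdef]; linarith
  have htτj1 : t ≤ τ (j+1) := by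
    rcases le_or_gt ⌊(t + M)/Δ⌋₊ (m-1) with hc | hc
    · have hj : j = ⌊(t + M)/Δ⌋₊ := min_eq_right hc
      have : (t+M)/Δ < j + 1 := by
        rw [hj]; push_cast; exact Nat.lt_floor_add_one _
      have : t + M < (j+1) * Δ := by
        rw [div_lt_iff₀ hΔ] at this; linarith
      simp only [hτdef]; push_cast; linarith
    · have hj : j = m - 1 := min_eq_left (le_of_lt hc)
      have : j + 1 = m := by omega
      rw [this, hτm]; exact ht2
  -- compute the sum
  have hsum : ∑ i ∈ Finset.range m, s i * (relu (t - τ i) - relu (t - τ (i+1)))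
      = (g (τ j) - g (-M)) + s j * (t - τ j) := by
    have hsplit : ∑ i ∈ Finset.range m, s i * (relu (t - τ i) - relu (t - τ (i+1)))
        = ∑ i ∈ Finset.range j, s i * (relu (t - τ i) - relu (t - τ (i+1)))
          + ∑ i ∈ Finset.Ico j m, s i * (relu (t - τ i) - relu (t - τ (i+1))) := by
      rw [Finset.range_eq_Ico, ← Finset.sum_Ico_consecutive _ (Nat.zero_le j) (by omega : j ≤ m), Finset.range_eq_Ico]
    have hlow : ∀ i ∈ Finset.range j, s i * (relu (t - τ i) - relu (t - τ (i+1)))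
        = g (τ (i+1)) - g (τ i) := by
      intro i hi
      rw [Finset.mem_range] at hi
      have h1 : 0 ≤ t - τ (i+1) := by
        have : τ (i+1) ≤ τ j := hτmono _ _ (by omega)
        linarith
      have h2 : 0 ≤ t - τ i := by
        have : τ i ≤ τ (i+1) := hτmono _ _ (by omega)
        linarith
      rw [relu_of_nonneg h1, relu_of_nonneg h2]
      have ht' : t - τ i - (t - τ (i+1)) = Δ := by rw [hτsucc i]; ring
      rw [ht', hsdef]
      field_simp
    have hhigh : ∀ i ∈ Finset.Ico (j+1) m, s i * (relu (t - τ i) - relu (t - τ (i+1))) = 0 := by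
      intro i hi
      rw [Finset.mem_Ico] at hi
      have h1 : t - τ i ≤ 0 := by
        have : τ (j+1) ≤ τ i := hτmono _ _ hi.1
        linarith
      have h2 : t - τ (i+1) ≤ 0 := by
        have : τ (j+1) ≤ τ (i+1) := hτmono _ _ (by omega)
        linarith
      rw [relu_of_nonpos h1, relu_of_nonpos h2]
      ring
    have hj : s j * (relu (t - τ j) - relu (t - τ (j+1))) = s j * (t - τ j) := by
      rw [relu_of_nonneg (by linarith), relu_of_nonpos (by linarith)]
      ring
    rw [hsplit, Finset.sum_congr rfl hlow, Finset.sum_range_sub (fun i => g (τ i)),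
      Finset.sum_eq_sum_Ico_succ_bot (by omega : j < m),
      Finset.sum_congr rfl hhigh, Finset.sum_const, hj, hτ0]
    simp
  -- final estimate
  rw [hsum]
  have e1 : |g t - g (τ j)| ≤ ε/2 := by
    have := hδg t ⟨ht1, ht2⟩ (τ j) (hτmem j (by omega)) (by
      rw [Real.dist_eq, abs_of_nonneg (by linarith)]
      have : τ (j+1) = τ j + Δ := hτsucc j
      linarith)
    rw [Real.dist_eq] at this
    linarith
  have e2 : |s j * (t - τ j)| ≤ ε/2 := by
    have hd : |g (τ (j+1)) - g (τ j)| ≤ ε/2 := by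
      have := hδg (τ (j+1)) (hτmem _ hjm) (τ j) (hτmem j (by omega)) (by
        rw [Real.dist_eq, hτsucc j, abs_of_nonneg (by linarith)]
        linarith)
      rw [Real.dist_eq] at this
      linarith
    have h1 : |t - τ j| ≤ Δ := by
      rw [abs_of_nonneg (by linarith)]
      have := hτsucc j
      linarith
    calc |s j * (t - τ j)| = |s j| * |t - τ j| := abs_mul _ _
    _ ≤ |s j| * Δ := mul_le_mul_of_nonneg_left h1 (abs_nonneg _)
    _ = |g (τ (j+1)) - g (τ j)| / Δ * Δ := by rw [hsdef]; simp [abs_div, abs_of_pos hΔ]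
    _ = |g (τ (j+1)) - g (τ j)| := by field_simp
    _ ≤ ε/2 := hd
  calc |g t - (g (-M) + (g (τ j) - g (-M) + s j * (t - τ j)))|
      = |(g t - g (τ j)) - s j * (t - τ j)| := by ring_nf
  _ ≤ |g t - g (τ j)| + |s j * (t - τ j)| := abs_sub _ _
  _ ≤ ε := by linarith



/-- one-hidden-layer scalar-output ReLU network functions -/
def IsNet (d : ℕ) (f : (Fin d → ℝ) → ℝ) : Prop :=
  ∃ (m : ℕ) (a : ℕ → ℝ) (w : ℕ → (Fin d) → ℝ) (b : ℕ → ℝ),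
    ∀ x, f x = ∑ i ∈ Finset.range m, a i * relu ((∑ q, w i q * x q) + b i)

lemma IsNet.add {d : ℕ} {f g : (Fin d → ℝ) → ℝ} (hf : IsNet d f) (hg : IsNet d g) :
    IsNet d (f + g) := by
  obtain ⟨m₁, a₁, w₁, b₁, h₁⟩ := hf
  obtain ⟨m₂, a₂, w₂, b₂, h₂⟩ := hg
  refine ⟨m₁ + m₂, fun i => if i < m₁ then a₁ i else a₂ (i - m₁),
    fun i => if i < m₁ then w₁ i else w₂ (i - m₁),
    fun i => if i < m₁ then b₁ i else b₂ (i - m₁), fun x => ?_⟩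
  rw [Finset.sum_range_add]
  simp only [Pi.add_apply, h₁ x, h₂ x]
  congr 1
  · exact Finset.sum_congr rfl fun i hi => by
      rw [Finset.mem_range] at hi; simp [hi]
  · exact Finset.sum_congr rfl fun i hi => by simp
lemma IsNet.smul {d : ℕ} {f : (Fin d → ℝ) → ℝ} (c : ℝ) (hf : IsNet d f) :
    IsNet d (fun x => c * f x) := by
  obtain ⟨m, a, w, b, h⟩ := hf
  exact ⟨m, fun i => c * a i, w, b, fun x => by
    simp only [h x, Finset.mul_sum]; exact Finset.sum_congr rfl fun i _ => by ring⟩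

lemma IsNet.zero {d : ℕ} : IsNet d (fun _ => 0) :=
  ⟨0, 0, 0, 0, fun x => by simp⟩

lemma IsNet.unit {d : ℕ} (a : ℝ) (w : Fin d → ℝ) (b : ℝ) :
    IsNet d (fun x => a * relu ((∑ q, w q * x q) + b)) :=
  ⟨1, fun _ => a, fun _ => w, fun _ => b, fun x => by simp⟩

lemma IsNet.sum {d : ℕ} {ι : Type*} (S : Finset ι) (f : ι → (Fin d → ℝ) → ℝ)
    (hf : ∀ i ∈ S, IsNet d (f i)) :
    IsNet d (fun x => ∑ i ∈ S, f i x) := by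
  classical
  induction S using Finset.induction_on with
  | empty => simpa using IsNet.zero
  | insert a s hnot ih =>
    simp only [Finset.sum_insert hnot]
    exact (hf a (Finset.mem_insert_self a s)).add
      (ih fun i hi => hf i (Finset.mem_insert_of_mem hi))



lemma IsNet.const {d : ℕ} (a : ℝ) : IsNet d (fun _ => a) := by
  have := IsNet.unit (d := d) a 0 1
  simpa [relu] using this

/-- exp-of-linear functions can be approximated by nets uniformly on a compact set -/
lemma exp_net_approx {d : ℕ} (U : Set (Fin d → ℝ)) (hU : IsCompact U)
    (w : Fin d → ℝ) (ε : ℝ) (hε : 0 < ε) :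
    ∃ g, IsNet d g ∧ ∀ x ∈ U, |Real.exp (∑ q, w q * x q) - g x| ≤ ε := by
  obtain ⟨C, hC⟩ := hU.exists_bound_of_continuousOn
    (Continuous.continuousOn (by continuity : Continuous fun x : Fin d → ℝ => ∑ q, w q * x q))
  set M : ℝ := max C 1 with hMdef
  have hM : 0 < M := lt_of_lt_of_le one_pos (le_max_right _ _)
  obtain ⟨m, s, τ, hpl⟩ := pl_approx Real.exp Real.continuous_exp M hM ε hε
  refine ⟨fun x => Real.exp (-M) + ∑ i ∈ Finset.range m,
      s i * (relu ((∑ q, w q * x q) - τ i) - relu ((∑ q, w q * x q) - τ (i+1))), ?_, ?_⟩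
  · have h1 : IsNet d (fun _ => Real.exp (-M)) := IsNet.const _
    have h2 : IsNet d (fun x => ∑ i ∈ Finset.range m,
        s i * (relu ((∑ q, w q * x q) - τ i) - relu ((∑ q, w q * x q) - τ (i+1)))) := by
      apply IsNet.sum
      intro i _
      have ha := IsNet.unit (d := d) (s i) w (-τ i)
      have hb := IsNet.unit (d := d) (-(s i)) w (-τ (i+1))
      have key : (fun x : Fin d → ℝ => s i * (relu ((∑ q, w q * x q) - τ i)
            - relu ((∑ q, w q * x q) - τ (i+1))))
          = (fun x : Fin d → ℝ => s i * relu ((∑ q, w q * x q) + -τ i))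
            + (fun x : Fin d → ℝ => -(s i) * relu ((∑ q, w q * x q) + -τ (i+1))) := by
        funext x
        simp only [Pi.add_apply, sub_eq_add_neg]
        ring
      rw [key]
      exact ha.add hb
    have key2 : (fun x : Fin d → ℝ => Real.exp (-M) + ∑ i ∈ Finset.range m,
        s i * (relu ((∑ q, w q * x q) - τ i) - relu ((∑ q, w q * x q) - τ (i+1))))
        = (fun _ => Real.exp (-M)) + (fun x => ∑ i ∈ Finset.range m,
        s i * (relu ((∑ q, w q * x q) - τ i) - relu ((∑ q, w q * x q) - τ (i+1)))) := rfl
    rw [key2]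
    exact h1.add h2
  · intro x hx
    have hxt : (∑ q, w q * x q) ∈ Set.Icc (-M) M := by
      have := hC x hx
      rw [Real.norm_eq_abs] at this
      have : |∑ q, w q * x q| ≤ M := le_trans this (le_max_left _ _)
      exact abs_le.mp this
    exact hpl _ hxt

/-- main uniform approximation: any continuous function can be uniformly approximated
by a one-hidden-layer ReLU network on a compact set -/
lemma net_uniform_approx {d : ℕ} (U : Set (Fin d → ℝ)) (hU : IsCompact U)
    (f : (Fin d → ℝ) → ℝ) (hf : Continuous f) (ε : ℝ) (hε : 0 < ε) :
    ∃ g, IsNet d g ∧ ∀ x ∈ U, |f x - g x| ≤ ε := by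
  classical
  rcases U.eq_empty_or_nonempty with hUe | hUne
  · exact ⟨fun _ => 0, IsNet.zero, by simp [hUe]⟩
  haveI : CompactSpace U := isCompact_iff_compactSpace.mp hU
  haveI : Nonempty U := hUne.to_subtype
  -- the exponential functions on U
  set E : (Fin d → ℝ) → C(U, ℝ) := fun w =>
    ⟨fun x => Real.exp (∑ q, w q * (x : Fin d → ℝ) q), by
      apply Real.continuous_exp.comp
      exact continuous_finset_sum _ fun q _ =>
        (continuous_const.mul ((continuous_apply q).comp continuous_subtype_val))⟩ with hEdef
  set S : Set C(U, ℝ) := Set.range E with hSdef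
  -- S is a submonoid
  have hone : (1 : C(U, ℝ)) ∈ S := by
    refine ⟨0, ?_⟩
    ext x
    simp [hEdef]
  have hmul : ∀ φ ψ : C(U, ℝ), φ ∈ S → ψ ∈ S → φ * ψ ∈ S := by
    rintro _ _ ⟨w₁, rfl⟩ ⟨w₂, rfl⟩
    refine ⟨w₁ + w₂, ?_⟩
    ext x
    simp only [hEdef, ContinuousMap.mul_apply, ContinuousMap.coe_mk, Pi.add_apply, add_mul,
      Finset.sum_add_distrib, Real.exp_add]
  set Smon : Submonoid C(U, ℝ) :=
    { carrier := S
      one_mem' := hone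
      mul_mem' := fun {a b} ha hb => hmul a b ha hb } with hSmon
  -- the subalgebra generated by S separates points
  set A : Subalgebra ℝ C(U, ℝ) := Algebra.adjoin ℝ S with hAdef
  have hsep : A.SeparatesPoints := by
    intro x y hxy
    have hvne : (x : Fin d → ℝ) ≠ (y : Fin d → ℝ) := fun hc => hxy (Subtype.ext hc)
    obtain ⟨q, hq⟩ : ∃ q, (x : Fin d → ℝ) q ≠ (y : Fin d → ℝ) q := by
      by_contra hc
      push_neg at hc
      exact hvne (funext hc)
    refine ⟨E (fun q' => if q' = q then 1 else 0), ⟨E _, Algebra.subset_adjoin ⟨_, rfl⟩, rfl⟩, ?_⟩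
    simp only [hEdef, ContinuousMap.coe_mk]
    have hx : ∀ z : U, (∑ q', (if q' = q then (1:ℝ) else 0) * (z : Fin d → ℝ) q')
        = (z : Fin d → ℝ) q := by
      intro z
      rw [Finset.sum_eq_single q] <;> simp +contextual
    rw [hx x, hx y]
    exact fun hc => hq (Real.exp_injective hc)
  have hclo := ContinuousMap.subalgebra_topologicalClosure_eq_top_of_separatesPoints A hsep
  -- f restricted to U is in the closure of A
  set fc : C(U, ℝ) := ⟨fun x => f x, hf.comp continuous_subtype_val⟩ with hfc
  have hmem : fc ∈ closure (A : Set C(U, ℝ)) := by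
    have : fc ∈ A.topologicalClosure := by rw [hclo]; trivial
    exact this
  obtain ⟨g, hgA, hgd⟩ := Metric.mem_closure_iff.mp hmem (ε/2) (by linarith)
  -- g is in the span of S
  have hgspan : g ∈ Submodule.span ℝ S := by
    have h1 : g ∈ Subalgebra.toSubmodule (Algebra.adjoin ℝ S) := hgA
    rw [Algebra.adjoin_eq_span] at h1
    have h3 : ∀ ψ ∈ Submonoid.closure S, ψ ∈ S := fun ψ hψ =>
      (Submonoid.closure_le (S := Smon)).mpr (fun y hy => hy) hψ
    exact (Submodule.span_le.mpr fun ψ hψ => Submodule.subset_span (h3 ψ hψ)) h1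
  obtain ⟨cf, hsupp, hsum⟩ := Submodule.mem_span_set.mp hgspan
  set T : Finset C(U, ℝ) := cf.support with hT
  -- choose exponents for each element of T
  have hw : ∀ φ ∈ T, ∃ w, E w = φ := fun φ hφ => hsupp hφ
  set wch : C(U, ℝ) → (Fin d → ℝ) := fun φ =>
    if h : ∃ w, E w = φ then h.choose else 0 with hwch
  have hwE : ∀ φ ∈ T, E (wch φ) = φ := by
    intro φ hφ
    have h := hw φ hφ
    simp only [hwch, dif_pos h]
    exact h.choose_spec
  -- total coefficient mass
  set R : ℝ := (∑ φ ∈ T, |cf φ|) + 1 with hR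
  have hR1 : 1 ≤ R := by
    have : 0 ≤ ∑ φ ∈ T, |cf φ| := Finset.sum_nonneg fun _ _ => abs_nonneg _
    linarith
  have hR0 : 0 < R := by linarith
  set ε' : ℝ := ε / (2 * R) with hε'
  have hε'0 : 0 < ε' := by positivity
  -- approximate each exponential by a net
  have hGex : ∀ φ : C(U, ℝ), ∃ G, IsNet d G ∧
      (φ ∈ T → ∀ x ∈ U, |Real.exp (∑ q, wch φ q * x q) - G x| ≤ ε') := by
    intro φ
    obtain ⟨G, hG1, hG2⟩ := exp_net_approx U hU (wch φ) ε' hε'0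
    exact ⟨G, hG1, fun _ => hG2⟩
  choose G hG1 hG2 using hGex
  refine ⟨fun x => ∑ φ ∈ T, cf φ * G φ x, IsNet.sum T _ (fun φ _ => (hG1 φ).smul _), ?_⟩
  intro x hx
  set z : U := ⟨x, hx⟩ with hz
  have hgz : g z = ∑ φ ∈ T, cf φ * φ z := by
    rw [← hsum]
    rw [Finsupp.sum]
    rw [ContinuousMap.sum_apply]
    exact Finset.sum_congr rfl fun φ _ => by simp
  have h1 : |f x - g z| ≤ ε / 2 := by
    have := ContinuousMap.dist_apply_le_dist (f := fc) (g := g) z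
    have h2 : dist (fc z) (g z) ≤ ε / 2 := le_trans this (le_of_lt hgd)
    rw [Real.dist_eq] at h2
    simpa [hfc] using h2
  have h2 : |g z - ∑ φ ∈ T, cf φ * G φ x| ≤ ε / 2 := by
    rw [hgz, ← Finset.sum_sub_distrib]
    calc |∑ φ ∈ T, (cf φ * φ z - cf φ * G φ x)|
        ≤ ∑ φ ∈ T, |cf φ * φ z - cf φ * G φ x| := Finset.abs_sum_le_sum_abs _ _
    _ ≤ ∑ φ ∈ T, |cf φ| * ε' := by
        apply Finset.sum_le_sum
        intro φ hφ
        rw [← mul_sub, abs_mul]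
        apply mul_le_mul_of_nonneg_left _ (abs_nonneg _)
        have hφz : φ z = Real.exp (∑ q, wch φ q * x q) := by
          rw [← ContinuousMap.congr_fun (hwE φ hφ) z]
          simp [hEdef, hz]
        rw [hφz]
        exact hG2 φ hφ x hx
    _ = (∑ φ ∈ T, |cf φ|) * ε' := by rw [← Finset.sum_mul]
    _ ≤ R * ε' := by
        apply mul_le_mul_of_nonneg_right _ (le_of_lt hε'0)
        rw [hR]; linarith
    _ = ε / 2 := by rw [hε']; field_simp
  calc |f x - ∑ φ ∈ T, cf φ * G φ x|
      ≤ |f x - g z| + |g z - ∑ φ ∈ T, cf φ * G φ x| := abs_sub_le _ _ _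
  _ ≤ ε := by linarith



lemma relu_div {t c : ℝ} (hc : 0 < c) : relu (t / c) = relu t / c := by
  unfold relu
  rw [show (0:ℝ) = 0 / c by simp, max_div_div_right (le_of_lt hc)]
  simp

/-- The ReLU is a `γ`-parameter bounding activation for every `γ > 0`: any continuous
function on a compact set can be approximated in `L¹` (with the ℓ¹ norm on the output)
by a one-hidden-layer ReLU network all of whose individual parameters lie in `[-γ, γ]`. -/
theorem relu_parameter_bounding
    (γ : ℝ) (hγ : 0 < γ) (d l : ℕ) (hd : 1 ≤ d) (hl : 1 ≤ l)
    (U : Set (Fin d → ℝ)) (hU : IsCompact U)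
    (h : (Fin d → ℝ) → Fin l → ℝ) (hh : Continuous h)
    (ε : ℝ) (hε : 0 < ε) :
    ∃ (n : ℕ) (A : Matrix (Fin l) (Fin n) ℝ) (B : Matrix (Fin n) (Fin d) ℝ) (b : Fin n → ℝ),
      (∀ p i, |A p i| ≤ γ) ∧ (∀ i q, |B i q| ≤ γ) ∧ (∀ i, |b i| ≤ γ) ∧
      (∫ x in U, ∑ p, |h x p - A.mulVec (fun i => relu (B.mulVec x i + b i)) p|) ≤ ε := by
  classical
  set V : ℝ := (volume U).toReal with hV
  have hV0 : 0 ≤ V := ENNReal.toReal_nonneg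
  have hl0 : (0:ℝ) < l := by exact_mod_cast hl
  set δ : ℝ := ε / (l * (V + 1)) with hδ
  have hδ0 : 0 < δ := by positivity
  -- approximate each component by a net
  have happ : ∀ p : Fin l, ∃ g : (Fin d → ℝ) → ℝ, (∃ (m : ℕ) (a : ℕ → ℝ) (w : ℕ → (Fin d) → ℝ) (b : ℕ → ℝ),
      ∀ x, g x = ∑ i ∈ Finset.range m, a i * relu ((∑ q, w i q * x q) + b i)) ∧
      ∀ x ∈ U, |h x p - g x| ≤ δ := fun p =>
    net_uniform_approx U hU (fun x => h x p) ((continuous_apply p).comp hh) δ hδ0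
  choose g hgnet hgapp using happ
  choose m a w b hrepr using hgnet
  -- index type for the combined hidden layer
  set ι : Type := (p : Fin l) × Fin (m p) with hι
  set w0 : ι → Fin d → ℝ := fun i => w i.1 i.2.val with hw0
  set b0 : ι → ℝ := fun i => b i.1 i.2.val with hb0
  set A0 : Fin l → ι → ℝ := fun p i => if p = i.1 then a i.1 i.2.val else 0 with hA0
  have hnet0 : ∀ (p : Fin l) (x : Fin d → ℝ),
      ∑ i : ι, A0 p i * relu ((∑ q, w0 i q * x q) + b0 i) = g p x := by
    intro p x
    rw [← Finset.univ_sigma_univ, Finset.sum_sigma]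
    rw [Finset.sum_eq_single p]
    · rw [hrepr p x, ← Fin.sum_univ_eq_sum_range
        (fun k => a p k * relu ((∑ q, w p k q * x q) + b p k)) (m p)]
      exact Finset.sum_congr rfl fun s _ => by simp [hA0, hw0, hb0]
    · intro p' _ hp'
      apply Finset.sum_eq_zero
      intro k _
      simp [hA0, hp'.symm]
    · intro hc
      exact absurd (Finset.mem_univ p) hc
  -- rescale hidden layer parameters
  set c : ι → ℝ := fun i => max (((∑ q, |w0 i q|) + |b0 i|) / γ) 1 with hc
  have hc1 : ∀ i, 1 ≤ c i := fun i => le_max_right _ _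
  have hc0 : ∀ i, 0 < c i := fun i => lt_of_lt_of_le one_pos (hc1 i)
  have hcw : ∀ i q, |w0 i q| ≤ c i * γ := by
    intro i q
    have h1 : ((∑ q, |w0 i q|) + |b0 i|) / γ ≤ c i := le_max_left _ _
    have h2 : (∑ q, |w0 i q|) + |b0 i| ≤ c i * γ := by
      rw [div_le_iff₀ hγ] at h1; linarith
    have h3 : |w0 i q| ≤ ∑ q, |w0 i q| :=
      Finset.single_le_sum (f := fun q => |w0 i q|) (fun _ _ => abs_nonneg _) (Finset.mem_univ q)
    have h4 : 0 ≤ |b0 i| := abs_nonneg _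
    linarith
  have hcb : ∀ i, |b0 i| ≤ c i * γ := by
    intro i
    have h1 : ((∑ q, |w0 i q|) + |b0 i|) / γ ≤ c i := le_max_left _ _
    have h2 : (∑ q, |w0 i q|) + |b0 i| ≤ c i * γ := by
      rw [div_le_iff₀ hγ] at h1; linarith
    have h3 : 0 ≤ ∑ q, |w0 i q| := Finset.sum_nonneg fun _ _ => abs_nonneg _
    linarith
  -- choose the duplication factor
  obtain ⟨K₀, hK₀⟩ := exists_nat_ge (∑ p, ∑ i : ι, |c i * A0 p i| / γ)
  set K : ℕ := K₀ + 1 with hK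
  have hK0 : (0:ℝ) < K := by positivity
  have hAK : ∀ (p : Fin l) (i : ι), |c i * A0 p i| ≤ K * γ := by
    intro p i
    have t1 : ∀ i' ∈ (Finset.univ : Finset ι), 0 ≤ |c i' * A0 p i'| / γ :=
      fun _ _ => by positivity
    have h1 := Finset.single_le_sum t1 (Finset.mem_univ i)
    have t2 : ∀ p' ∈ (Finset.univ : Finset (Fin l)), 0 ≤ ∑ i' : ι, |c i' * A0 p' i'| / γ :=
      fun _ _ => Finset.sum_nonneg fun _ _ => by positivity
    have h2 := Finset.single_le_sum t2 (Finset.mem_univ p)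
    have hKK : (K₀:ℝ) ≤ K := by rw [hK]; push_cast; linarith
    have h3 : |c i * A0 p i| / γ ≤ (K:ℝ) := by linarith
    rw [div_le_iff₀ hγ] at h3
    linarith
  -- the final network
  set n : ℕ := Fintype.card (ι × Fin K) with hn
  set e : Fin n ≃ ι × Fin K := (Fintype.equivFin (ι × Fin K)).symm with he
  refine ⟨n, fun p j => c (e j).1 * A0 p (e j).1 / K,
    fun j q => w0 (e j).1 q / c (e j).1,
    fun j => b0 (e j).1 / c (e j).1, ?_, ?_, ?_, ?_⟩
  · intro p j
    rw [abs_div, abs_of_pos hK0, div_le_iff₀ hK0]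
    calc |c (e j).1 * A0 p (e j).1| ≤ K * γ := hAK _ _
    _ = γ * K := mul_comm _ _
  · intro j q
    rw [abs_div, abs_of_pos (hc0 _), div_le_iff₀ (hc0 _)]
    calc |w0 (e j).1 q| ≤ c (e j).1 * γ := hcw _ _
    _ = γ * c (e j).1 := mul_comm _ _
  · intro j
    rw [abs_div, abs_of_pos (hc0 _), div_le_iff₀ (hc0 _)]
    calc |b0 (e j).1| ≤ c (e j).1 * γ := hcb _
    _ = γ * c (e j).1 := mul_comm _ _
  -- the integral bound
  have hnet : ∀ (p : Fin l) (x : Fin d → ℝ),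
      (Matrix.mulVec (fun p j => c (e j).1 * A0 p (e j).1 / K)
        (fun j => relu (Matrix.mulVec (fun j q => w0 (e j).1 q / c (e j).1) x j
          + b0 (e j).1 / c (e j).1)) : Fin l → ℝ) p = g p x := by
    intro p x
    rw [← hnet0 p x]
    simp only [Matrix.mulVec, dotProduct]
    rw [Equiv.sum_comp e (fun i' : ι × Fin K =>
      c i'.1 * A0 p i'.1 / K * relu ((∑ q, w0 i'.1 q / c i'.1 * x q) + b0 i'.1 / c i'.1))]
    rw [Fintype.sum_prod_type]
    apply Finset.sum_congr rfl
    intro i _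
    show (∑ _y : Fin K, c i * A0 p i / K
        * relu ((∑ q, w0 i q / c i * x q) + b0 i / c i)) = _
    rw [Finset.sum_const, Finset.card_univ, Fintype.card_fin]
    have harg : (∑ q, w0 i q / c i * x q) + b0 i / c i
        = ((∑ q, w0 i q * x q) + b0 i) / c i := by
      rw [add_div, Finset.sum_div]
      congr 1
      exact Finset.sum_congr rfl fun q _ => by ring
    rw [harg, relu_div (hc0 i)]
    have hKne : (K:ℝ) ≠ 0 := ne_of_gt hK0
    have hcne : c i ≠ 0 := ne_of_gt (hc0 i)
    field_simp
    rw [nsmul_eq_mul]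
    field_simp
  have hbound : ∀ x ∈ U,
      ‖∑ p, |h x p - Matrix.mulVec (fun p j => c (e j).1 * A0 p (e j).1 / K)
        (fun j => relu (Matrix.mulVec (fun j q => w0 (e j).1 q / c (e j).1) x j
          + b0 (e j).1 / c (e j).1)) p|‖ ≤ l * δ := by
    intro x hx
    rw [Real.norm_eq_abs, abs_of_nonneg (Finset.sum_nonneg fun _ _ => abs_nonneg _)]
    calc ∑ p, |h x p - Matrix.mulVec (fun p j => c (e j).1 * A0 p (e j).1 / K)
          (fun j => relu (Matrix.mulVec (fun j q => w0 (e j).1 q / c (e j).1) x j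
            + b0 (e j).1 / c (e j).1)) p|
        = ∑ p, |h x p - g p x| := by
          apply Finset.sum_congr rfl
          intro p _
          rw [hnet p x]
    _ ≤ ∑ _p : Fin l, δ := Finset.sum_le_sum fun p _ => hgapp p x hx
    _ = l * δ := by rw [Finset.sum_const, Finset.card_univ, Fintype.card_fin]; simp [mul_comm]
  have hint := norm_setIntegral_le_of_norm_le_const (μ := volume)
    hU.measure_lt_top hbound
  calc (∫ x in U, ∑ p, |h x p - Matrix.mulVec (fun p j => c (e j).1 * A0 p (e j).1 / K)
        (fun j => relu (Matrix.mulVec (fun j q => w0 (e j).1 q / c (e j).1) x j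
          + b0 (e j).1 / c (e j).1)) p|)
      ≤ ‖∫ x in U, ∑ p, |h x p - Matrix.mulVec (fun p j => c (e j).1 * A0 p (e j).1 / K)
        (fun j => relu (Matrix.mulVec (fun j q => w0 (e j).1 q / c (e j).1) x j
          + b0 (e j).1 / c (e j).1)) p|‖ := le_abs_self _
  _ ≤ l * δ * V := hint
  _ ≤ ε := by
      rw [hδ]
      rw [show (l:ℝ) * (ε / (l * (V + 1))) * V = ε * (V / (V + 1)) by field_simp]
      have : V / (V + 1) ≤ 1 := by
        rw [div_le_one (by linarith)]; linarith
      nlinarith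
end

section
/- Random-network subnetwork matching lemma: Let n, d, l ≥ 1 be natural numbers, let γ > 0 and Δγ > 0 and set γ̄ = γ + Δγ. Let W* ∈ ℝ^{n×n}, B* ∈ ℝ^{n×d}, A* ∈ ℝ^{l×n}, b* ∈ ℝ^n have every entry in [−γ, γ]. Let ε' > 0 and δ ∈ (0,1), set ε = min(ε', Δγ) and ν = n(n + d + l + 1). Let k be a natural number with k ≥ log δ / log(1 − (ε/γ̄)^ν) and let m = k·n. Suppose W ∈ ℝ^{m×m}, B ∈ ℝ^{m×d}, A ∈ ℝ^{l×m}, b ∈ ℝ^m have all entries given by mutually independent random variables, each uniformly distributed on [−γ̄, γ̄]. Then with probability at least 1 − δ there exists a strictly increasing map σ : {1,…,n} → {1,…,m} such that |W_{σ(i),σ(j)} − W*_{i,j}| < ε' for all i, j ∈ {1,…,n}, |B_{σ(i),q} − B*_{i,q}| < ε' for all i ∈ {1,…,n} and q ∈ {1,…,d}, |A_{p,σ(i)} − A*_{p,i}| < ε' for all p ∈ {1,…,l} and i ∈ {1,…,n}, and |b_{σ(i)} − b*_i| < ε' for all i ∈ {1,…,n}. -/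
open MeasureTheory

/-- The uniform probability measure on the interval `[-R, R]`. -/
noncomputable def unif (R : ℝ) : Measure ℝ :=
  (volume (Set.Icc (-R) R))⁻¹ • volume.restrict (Set.Icc (-R) R)

/-- Index type for the parameters of a width-`m` recurrent network with input dimension
`d` and output dimension `l`: recurrent entries, input entries, output entries, biases. -/
abbrev ParamIdx (m d l : ℕ) := (Fin m × Fin m) ⊕ (Fin m × Fin d) ⊕ (Fin l × Fin m) ⊕ Fin m

lemma unif_apply (R : ℝ) (s : Set ℝ) :
    unif R s = (ENNReal.ofReal (2 * R))⁻¹ * volume (s ∩ Set.Icc (-R) R) := by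
  have h : R - (-R) = 2 * R := by ring
  simp [unif, Measure.restrict_apply' measurableSet_Icc, Real.volume_Icc, h]

lemma unif_isProb {R : ℝ} (hR : 0 < R) : IsProbabilityMeasure (unif R) := by
  constructor
  rw [unif_apply, Set.univ_inter, Real.volume_Icc]
  have h : R - (-R) = 2 * R := by ring
  rw [h, ENNReal.inv_mul_cancel]
  · simp only [ne_eq, ENNReal.ofReal_eq_zero, not_le]; linarith
  · exact ENNReal.ofReal_ne_top

lemma unif_Ioo {R a b : ℝ} (hR : 0 < R) (ha : -R ≤ a) (hb : b ≤ R) :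
    unif R (Set.Ioo a b) = ENNReal.ofReal ((b - a) / (2 * R)) := by
  have hsub : Set.Ioo a b ∩ Set.Icc (-R) R = Set.Ioo a b := by
    refine Set.inter_eq_left.2 fun x hx => ⟨by linarith [hx.1], by linarith [hx.2]⟩
  rw [unif_apply, hsub, Real.volume_Ioo, ENNReal.ofReal_div_of_pos (by linarith),
    ENNReal.div_eq_inv_mul]

/-- `A` is determined by the coordinates in `u`. -/
def DetBy {ι α : Type*} (u : Set ι) (A : Set (ι → α)) : Prop :=
  ∀ ω ω' : ι → α, (∀ i ∈ u, ω i = ω' i) → ω ∈ A → ω' ∈ A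

lemma DetBy.compl {ι α : Type*} {u : Set ι} {A : Set (ι → α)} (h : DetBy u A) :
    DetBy u Aᶜ := fun ω ω' hag hω hmem =>
  hω (h ω' ω (fun i hi => (hag i hi).symm) hmem)

lemma pi_inter_of_detBy {ι : Type*} [Fintype ι] {α : Type*} [MeasurableSpace α] [Nonempty α]
    (μ : ι → Measure α) [∀ i, IsProbabilityMeasure (μ i)]
    (u : Set ι) (A B : Set (ι → α)) (hAm : MeasurableSet A) (hBm : MeasurableSet B)
    (hA : DetBy u A) (hB : DetBy uᶜ B) :
    Measure.pi μ (A ∩ B) = Measure.pi μ A * Measure.pi μ B := by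
  classical
  set p : ι → Prop := fun i => i ∈ u with hp
  set E := MeasurableEquiv.piEquivPiSubtypeProd (fun _ : ι => α) p with hEdef
  have hE := measurePreserving_piEquivPiSubtypeProd μ p
  obtain ⟨z⟩ := ‹Nonempty α›
  set ext1 : ({i // p i} → α) → (ι → α) := fun η i => if h : p i then η ⟨i, h⟩ else z with h1
  set ext2 : ({i // ¬ p i} → α) → (ι → α) := fun η i => if h : ¬ p i then η ⟨i, h⟩ else z with h2
  have hext1 : Measurable ext1 := measurable_pi_iff.2 fun i => by
    by_cases h : p i
    · simp only [h1, dif_pos h]; exact measurable_pi_apply _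
    · simp only [h1, dif_neg h]; exact measurable_const
  have hext2 : Measurable ext2 := measurable_pi_iff.2 fun i => by
    by_cases h : ¬ p i
    · simp only [h2, dif_pos h]; exact measurable_pi_apply _
    · simp only [h2, dif_neg h]; exact measurable_const
  set A' := ext1 ⁻¹' A with hA'
  set B' := ext2 ⁻¹' B with hB'
  have hA'm : MeasurableSet A' := hext1 hAm
  have hB'm : MeasurableSet B' := hext2 hBm
  have keyA : ∀ ω : ι → α, (ω ∈ A ↔ ext1 (fun i : {i // p i} => ω i) ∈ A) := by
    intro ω
    have hag : ∀ i ∈ u, ω i = ext1 (fun i : {i // p i} => ω i) i := by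
      intro i hi; simp [h1, hp, hi]
    exact ⟨fun h => hA _ _ hag h, fun h => hA _ _ (fun i hi => (hag i hi).symm) h⟩
  have keyB : ∀ ω : ι → α, (ω ∈ B ↔ ext2 (fun i : {i // ¬ p i} => ω i) ∈ B) := by
    intro ω
    have hag : ∀ i ∈ uᶜ, ω i = ext2 (fun i : {i // ¬ p i} => ω i) i := by
      intro i hi
      have : ¬ p i := hi
      simp [h2, this]
    exact ⟨fun h => hB _ _ hag h, fun h => hB _ _ (fun i hi => (hag i hi).symm) h⟩
  have memA' : ∀ ω : ι → α, ((E ω).1 ∈ A' ↔ ω ∈ A) := by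
    intro ω; rw [hA', Set.mem_preimage]; exact (keyA ω).symm
  have memB' : ∀ ω : ι → α, ((E ω).2 ∈ B' ↔ ω ∈ B) := by
    intro ω; rw [hB', Set.mem_preimage]; exact (keyB ω).symm
  have hprodAB : A ∩ B = E ⁻¹' (A' ×ˢ B') := by
    ext ω; simp only [Set.mem_inter_iff, Set.mem_preimage, Set.mem_prod, memA', memB']
  have hprodA : A = E ⁻¹' (A' ×ˢ Set.univ) := by
    ext ω; simp only [Set.mem_preimage, Set.mem_prod, Set.mem_univ, and_true, memA']
  have hprodB : B = E ⁻¹' ((Set.univ : Set ({i // p i} → α)) ×ˢ B') := by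
    ext ω; simp only [Set.mem_preimage, Set.mem_prod, Set.mem_univ, true_and, memB']
  have happ : ∀ (S : Set (({i // p i} → α) × ({i // ¬ p i} → α))), MeasurableSet S →
      Measure.pi μ (E ⁻¹' S) =
        ((Measure.pi fun i : {i // p i} => μ i).prod
          (Measure.pi fun i : {i // ¬ p i} => μ i)) S := by
    intro S hS
    rw [← hE.map_eq, Measure.map_apply E.measurable hS]
  rw [hprodAB, hprodA, hprodB, happ _ (hA'm.prod hB'm), happ _ (hA'm.prod MeasurableSet.univ),
    happ _ (MeasurableSet.univ.prod hB'm), Measure.prod_prod, Measure.prod_prod,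
    Measure.prod_prod, measure_univ, measure_univ, mul_one, one_mul]

lemma pi_iInter_of_detBy {ι J : Type*} [Fintype ι] [Fintype J] {α : Type*} [MeasurableSpace α]
    [Nonempty α] (μ : ι → Measure α) [∀ i, IsProbabilityMeasure (μ i)]
    (u : J → Set ι) (A : J → Set (ι → α)) (hd : Pairwise (Function.onFun Disjoint u))
    (hAm : ∀ t, MeasurableSet (A t)) (hA : ∀ t, DetBy (u t) (A t)) :
    Measure.pi μ (⋂ t, A t) = ∏ t, Measure.pi μ (A t) := by
  classical
  suffices H : ∀ s : Finset J, Measure.pi μ (⋂ t ∈ s, A t) = ∏ t ∈ s, Measure.pi μ (A t) by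
    simpa using H Finset.univ
  intro s
  induction s using Finset.induction_on with
  | empty => simp
  | insert t₀ s ht₀ ih =>
    rw [Finset.set_biInter_insert, Finset.prod_insert ht₀, ← ih]
    refine pi_inter_of_detBy μ (u t₀) _ _ (hAm t₀) ?_ (hA t₀) ?_
    · exact MeasurableSet.biInter s.countable_toSet fun t _ => hAm t
    · intro ω ω' hag hmem
      rw [Set.mem_iInter₂] at hmem ⊢
      intro t ht
      refine hA t ω ω' ?_ (hmem t ht)
      intro i hi
      refine hag i ?_
      have hne : t ≠ t₀ := by rintro rfl; exact ht₀ ht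
      exact fun hiu => (Set.disjoint_left.1 (hd hne) hi) hiu

lemma pi_iInter_eval {ι C : Type*} [Fintype ι] [Fintype C] {α : Type*} [MeasurableSpace α]
    (μ : ι → Measure α) [∀ i, IsProbabilityMeasure (μ i)]
    (e : C → ι) (he : Function.Injective e) (S : C → Set α) (hS : ∀ c, MeasurableSet (S c)) :
    Measure.pi μ (⋂ c, (fun ω => ω (e c)) ⁻¹' S c) = ∏ c, μ (e c) (S c) := by
  classical
  set T : ι → Set α := fun i => if h : ∃ c, e c = i then S h.choose else Set.univ with hT
  have hTe : ∀ c, T (e c) = S c := by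
    intro c
    have h : ∃ c', e c' = e c := ⟨c, rfl⟩
    simp only [hT, dif_pos h]
    exact congrArg S (he h.choose_spec)
  have hset : (⋂ c, (fun ω => ω (e c)) ⁻¹' S c) = Set.pi Set.univ T := by
    ext ω
    simp only [Set.mem_iInter, Set.mem_preimage, Set.mem_univ_pi]
    constructor
    · intro h i
      by_cases hi : ∃ c, e c = i
      · rcases hi with ⟨c, rfl⟩; rw [hTe]; exact h c
      · simp [hT, dif_neg hi]
    · intro h c; have := h (e c); rwa [hTe] at this
  rw [hset, Measure.pi_pi]
  have h1 : ∏ i, μ i (T i) = ∏ i ∈ Finset.univ.image e, μ i (T i) := by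
    symm
    apply Finset.prod_subset (Finset.subset_univ _)
    intro i _ hi
    have hne : ¬ ∃ c, e c = i := by
      rintro ⟨c, rfl⟩; exact hi (Finset.mem_image_of_mem e (Finset.mem_univ c))
    simp [hT, dif_neg hne]
  rw [h1, Finset.prod_image (fun c _ c' _ h => he h)]
  exact Finset.prod_congr rfl fun c _ => by rw [hTe]

/-- Random-network subnetwork matching lemma: given target parameters
`W* ∈ ℝ^{n×n}, B* ∈ ℝ^{n×d}, A* ∈ ℝ^{l×n}, b* ∈ ℝ^n` with entries in `[-γ, γ]`, and a
random network of width `m = k·n` whose parameters are mutually independent and uniform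
on `[-γ̄, γ̄]` with `γ̄ = γ + Δγ`, if `k ≥ log δ / log (1 - (ε/γ̄)^ν)` where
`ε = min ε' Δγ` and `ν = n(n+d+l+1)`, then with probability at least `1 - δ` there is a
strictly increasing selection of `n` hidden units whose parameters match the target
parameters to within `ε'`. -/
theorem random_subnetwork_matching
    (n d l : ℕ) (hn : 1 ≤ n) (hd : 1 ≤ d) (hl : 1 ≤ l)
    (γ Δγ : ℝ) (hγ : 0 < γ) (hΔγ : 0 < Δγ)
    (Wstar : Matrix (Fin n) (Fin n) ℝ) (Bstar : Matrix (Fin n) (Fin d) ℝ)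
    (Astar : Matrix (Fin l) (Fin n) ℝ) (bstar : Fin n → ℝ)
    (hWs : ∀ i j, |Wstar i j| ≤ γ) (hBs : ∀ i q, |Bstar i q| ≤ γ)
    (hAs : ∀ p i, |Astar p i| ≤ γ) (hbs : ∀ i, |bstar i| ≤ γ)
    (ε' δ : ℝ) (hε' : 0 < ε') (hδ : δ ∈ Set.Ioo (0 : ℝ) 1)
    (k : ℕ)
    (hk : (k : ℝ) ≥ Real.log δ /
      Real.log (1 - (min ε' Δγ / (γ + Δγ)) ^ (n * (n + d + l + 1)))) :
    ENNReal.ofReal (1 - δ) ≤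
      Measure.pi (fun _ : ParamIdx (k * n) d l => unif (γ + Δγ))
        {ω | ∃ σ : Fin n → Fin (k * n), StrictMono σ ∧
          (∀ i j, |ω (Sum.inl (σ i, σ j)) - Wstar i j| < ε') ∧
          (∀ i q, |ω (Sum.inr (Sum.inl (σ i, q))) - Bstar i q| < ε') ∧
          (∀ p i, |ω (Sum.inr (Sum.inr (Sum.inl (p, σ i)))) - Astar p i| < ε') ∧
          (∀ i, |ω (Sum.inr (Sum.inr (Sum.inr (σ i)))) - bstar i| < ε')} := by
  classical
  haveI : IsProbabilityMeasure (unif (γ + Δγ)) := unif_isProb (by linarith)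
  set gb : ℝ := γ + Δγ with hgb
  have hgb0 : 0 < gb := by rw [hgb]; linarith
  set ε : ℝ := min ε' Δγ with hε
  have hε0 : 0 < ε := lt_min hε' hΔγ
  have hεΔ : ε ≤ Δγ := min_le_right _ _
  have hεε' : ε ≤ ε' := min_le_left _ _
  have hεgb : ε < gb := by rw [hgb]; linarith [min_le_right ε' Δγ]
  set ν : ℕ := n * (n + d + l + 1) with hν
  set μ := Measure.pi (fun _ : ParamIdx (k * n) d l => unif gb) with hμ
  -- block inclusion maps
  have hbd : ∀ (t : Fin k) (i : Fin n), (t : ℕ) * n + i < k * n := by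
    intro t i
    calc (t : ℕ) * n + i < (t : ℕ) * n + n := by omega
    _ = ((t : ℕ) + 1) * n := by ring
    _ ≤ k * n := Nat.mul_le_mul_right n t.2
  set inc : Fin k → Fin n → Fin (k * n) := fun t i => ⟨(t : ℕ) * n + i, hbd t i⟩ with hincdef
  have hinc : ∀ (t t' : Fin k) (i i' : Fin n), inc t i = inc t' i' → t = t' ∧ i = i' := by
    intro t t' i i' h
    have hval : (t : ℕ) * n + i = (t' : ℕ) * n + i' := congrArg Fin.val h
    have step : ∀ (a b x y : ℕ), x < n → a < b → a * n + x < b * n + y := by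
      intro a b x y hx hab
      calc a * n + x < (a + 1) * n := by
            have : (a + 1) * n = a * n + n := by ring
            omega
      _ ≤ b * n := Nat.mul_le_mul_right n hab
      _ ≤ b * n + y := Nat.le_add_right _ _
    have htt : (t : ℕ) = t' := by
      rcases lt_trichotomy (t : ℕ) (t' : ℕ) with h' | h' | h'
      · exact absurd hval (Nat.ne_of_lt (step _ _ _ _ i.2 h'))
      · exact h'
      · exact absurd hval.symm (Nat.ne_of_lt (step _ _ _ _ i'.2 h'))
    refine ⟨Fin.ext htt, Fin.ext ?_⟩
    rw [htt] at hval
    omega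
  -- block coordinate embeddings
  set e : Fin k → ParamIdx n d l → ParamIdx (k * n) d l := fun t c =>
    match c with
    | .inl (i, j) => .inl (inc t i, inc t j)
    | .inr (.inl (i, q)) => .inr (.inl (inc t i, q))
    | .inr (.inr (.inl (p, i))) => .inr (.inr (.inl (p, inc t i)))
    | .inr (.inr (.inr i)) => .inr (.inr (.inr (inc t i))) with hedef
  have hei : ∀ (t t' : Fin k) (c c' : ParamIdx n d l), e t c = e t' c' → t = t' ∧ c = c' := by
    rintro t t' (⟨i, j⟩ | ⟨i, q⟩ | ⟨p, i⟩ | i) (⟨i', j'⟩ | ⟨i', q'⟩ | ⟨p', i'⟩ | i') h <;>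
      simp only [hedef, Sum.inl.injEq, Sum.inr.injEq, Prod.mk.injEq, reduceCtorEq] at h
    · obtain ⟨h1, h2⟩ := h
      obtain ⟨ht, hi⟩ := hinc _ _ _ _ h1
      obtain ⟨-, hj⟩ := hinc _ _ _ _ h2
      exact ⟨ht, by rw [hi, hj]⟩
    · obtain ⟨h1, h2⟩ := h
      obtain ⟨ht, hi⟩ := hinc _ _ _ _ h1
      exact ⟨ht, by rw [hi, h2]⟩
    · obtain ⟨h1, h2⟩ := h
      obtain ⟨ht, hi⟩ := hinc _ _ _ _ h2
      exact ⟨ht, by rw [hi, h1]⟩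
    · obtain ⟨ht, hi⟩ := hinc _ _ _ _ h
      exact ⟨ht, by rw [hi]⟩
  -- target values
  set tgt : ParamIdx n d l → ℝ := fun c =>
    match c with
    | .inl (i, j) => Wstar i j
    | .inr (.inl (i, q)) => Bstar i q
    | .inr (.inr (.inl (p, i))) => Astar p i
    | .inr (.inr (.inr i)) => bstar i with htgtdef
  have htgt : ∀ c, |tgt c| ≤ γ := by
    rintro (⟨i, j⟩ | ⟨i, q⟩ | ⟨p, i⟩ | i)
    · exact hWs i j
    · exact hBs i q
    · exact hAs p i
    · exact hbs i
  -- hit events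
  set Hit : Fin k → Set (ParamIdx (k * n) d l → ℝ) := fun t =>
    ⋂ c, (fun ω => ω (e t c)) ⁻¹' Set.Ioo (tgt c - ε) (tgt c + ε) with hHitdef
  have hHitm : ∀ t, MeasurableSet (Hit t) :=
    fun t => MeasurableSet.iInter fun c => (measurable_pi_apply (e t c)) measurableSet_Ioo
  have hHitmeas : ∀ t, μ (Hit t) = ENNReal.ofReal (ε / gb) ^ ν := by
    intro t
    rw [hHitdef]
    rw [pi_iInter_eval (fun _ => unif gb) (e t) (fun c c' h => (hei t t c c' h).2)
      _ (fun c => measurableSet_Ioo)]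
    have hval : ∀ c : ParamIdx n d l,
        unif gb (Set.Ioo (tgt c - ε) (tgt c + ε)) = ENNReal.ofReal (ε / gb) := by
      intro c
      have h1 : -gb ≤ tgt c - ε := by
        have := (abs_le.1 (htgt c)).1; rw [hgb]; linarith
      have h2 : tgt c + ε ≤ gb := by
        have := (abs_le.1 (htgt c)).2; rw [hgb]; linarith
      rw [unif_Ioo hgb0 h1 h2]
      congr 1
      field_simp
      ring
    simp only [hval, Finset.prod_const, Finset.card_univ]
    congr 1
    simp only [Fintype.card_sum, Fintype.card_prod, Fintype.card_fin, hν]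
    ring
  -- the events Hitᶜ are determined by disjoint coordinate blocks
  have hdet : ∀ t, DetBy (Set.range (e t)) (Hit t) := by
    intro t ω ω' hag hmem
    rw [hHitdef, Set.mem_iInter] at hmem ⊢
    intro c
    have := hag (e t c) ⟨c, rfl⟩
    simpa [← this] using hmem c
  have hdisj : Pairwise (Function.onFun Disjoint (fun t => Set.range (e t))) := by
    intro t t' hne
    rw [Function.onFun, Set.disjoint_left]
    rintro x ⟨c, rfl⟩ ⟨c', hc'⟩
    exact hne ((hei t' t c' c hc').1).symm
  -- product formula
  have hprod : μ (⋂ t, (Hit t)ᶜ) = (1 - ENNReal.ofReal (ε / gb) ^ ν) ^ k := by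
    rw [hμ, pi_iInter_of_detBy _ _ _ hdisj (fun t => (hHitm t).compl)
      (fun t => (hdet t).compl)]
    have : ∀ t : Fin k, Measure.pi (fun _ : ParamIdx (k * n) d l => unif gb) (Hit t)ᶜ =
        1 - ENNReal.ofReal (ε / gb) ^ ν := by
      intro t
      rw [prob_compl_eq_one_sub (hHitm t), ← hμ, hHitmeas t]
    simp only [this, Finset.prod_const, Finset.card_univ, Fintype.card_fin]
  -- inclusion of the union of hits in the target event
  have hsub : (⋂ t, (Hit t)ᶜ)ᶜ ⊆
      {ω : ParamIdx (k * n) d l → ℝ | ∃ σ : Fin n → Fin (k * n), StrictMono σ ∧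
        (∀ i j, |ω (Sum.inl (σ i, σ j)) - Wstar i j| < ε') ∧
        (∀ i q, |ω (Sum.inr (Sum.inl (σ i, q))) - Bstar i q| < ε') ∧
        (∀ p i, |ω (Sum.inr (Sum.inr (Sum.inl (p, σ i)))) - Astar p i| < ε') ∧
        (∀ i, |ω (Sum.inr (Sum.inr (Sum.inr (σ i)))) - bstar i| < ε')} := by
    intro ω hω
    rw [Set.mem_compl_iff, Set.mem_iInter] at hω
    push_neg at hω
    obtain ⟨t, ht⟩ := hω
    rw [Set.notMem_compl_iff, hHitdef, Set.mem_iInter] at ht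
    have key : ∀ c : ParamIdx n d l, |ω (e t c) - tgt c| < ε' := by
      intro c
      have := ht c
      rw [Set.mem_preimage, Set.mem_Ioo] at this
      have : |ω (e t c) - tgt c| < ε := abs_sub_lt_iff.2 ⟨by linarith [this.1, this.2],
        by linarith [this.1, this.2]⟩
      linarith [this, hεε']
    refine ⟨inc t, ?_, ?_, ?_, ?_, ?_⟩
    · intro i j hij
      simp only [hincdef, Fin.mk_lt_mk, Fin.lt_def]
      omega
    · intro i j; exact key (.inl (i, j))
    · intro i q; exact key (.inr (.inl (i, q)))
    · intro p i; exact key (.inr (.inr (.inl (p, i))))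
    · intro i; exact key (.inr (.inr (.inr i)))
  -- numeric bound
  set p : ℝ := ε / gb with hp
  have hp0 : 0 < p := div_pos hε0 hgb0
  have hp1 : p < 1 := (div_lt_one hgb0).2 hεgb
  have hν1 : 1 ≤ ν := by
    rw [hν]; exact Nat.one_le_iff_ne_zero.2 (by positivity)
  have hpν0 : 0 < p ^ ν := pow_pos hp0 ν
  have hpν1 : p ^ ν < 1 := pow_lt_one₀ hp0.le hp1 (by omega)
  set r : ℝ := 1 - p ^ ν with hr
  have hr0 : 0 < r := by rw [hr]; linarith
  have hr1 : r < 1 := by rw [hr]; linarith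
  have hlogr : Real.log r < 0 := Real.log_neg hr0 hr1
  have hrk : r ^ k ≤ δ := by
    have h1 : (k : ℝ) * Real.log r ≤ Real.log δ := by
      have := (div_le_iff_of_neg hlogr).1 hk
      linarith [this]
    have h2 : r ^ k = Real.exp ((k : ℝ) * Real.log r) := by
      rw [← Real.log_pow, Real.exp_log (pow_pos hr0 k)]
    rw [h2, ← Real.exp_log hδ.1]
    exact Real.exp_le_exp.2 h1
  -- conclude
  have hbad : μ (⋂ t, (Hit t)ᶜ) ≤ ENNReal.ofReal δ := by
    rw [hprod]
    have hq : ENNReal.ofReal (ε / gb) ^ ν = ENNReal.ofReal (p ^ ν) := by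
      rw [hp, ENNReal.ofReal_pow (by positivity)]
    rw [hq]
    have h1 : (1 : ENNReal) - ENNReal.ofReal (p ^ ν) = ENNReal.ofReal r := by
      rw [hr, ENNReal.ofReal_sub _ hpν0.le, ENNReal.ofReal_one]
    rw [h1, ← ENNReal.ofReal_pow hr0.le]
    exact ENNReal.ofReal_le_ofReal hrk
  calc ENNReal.ofReal (1 - δ) = 1 - ENNReal.ofReal δ := by
        rw [ENNReal.ofReal_sub _ hδ.1.le, ENNReal.ofReal_one]
  _ ≤ 1 - μ (⋂ t, (Hit t)ᶜ) := tsub_le_tsub_left hbad 1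
  _ = μ ((⋂ t, (Hit t)ᶜ)ᶜ) := by
        rw [prob_compl_eq_one_sub (MeasurableSet.iInter fun t => (hHitm t).compl)]
  _ ≤ _ := measure_mono hsub
end

section
/- Perturbation bound for one-hidden-layer networks (Lemma B.4 of the paper): Let n, d, l ≥ 1 be natural numbers, let φ : ℝ → ℝ be Lipschitz with constant K_φ, and let M_x, M_φ, γ̄, ε > 0. Let A ∈ ℝ^{l×n}, B ∈ ℝ^{n×d}, b ∈ ℝ^n be target parameters and A' ∈ ℝ^{l×n}, B' ∈ ℝ^{n×d}, b' ∈ ℝ^n be perturbed parameters satisfying: |A'_{p,i}| ≤ γ̄ for all p, i; |A'_{p,i} − A_{p,i}| < ε, |B'_{i,q} − B_{i,q}| < ε, and |b'_i − b_i| < ε for all indices. Let x ∈ ℝ^d satisfy ‖x‖ ≤ M_x and suppose |φ(B_{i,:} x + b_i)| ≤ M_φ for every i ∈ {1,…,n}. Then ‖A'·φ(B'x + b') − A·φ(Bx + b)‖ ≤ n·l·(γ̄·K_φ·(M_x + 1) + M_φ)·ε, where φ is applied entrywise. -/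
/-- Perturbation bound for one-hidden-layer networks: if the perturbed output weights are
bounded by `γ̄`, every perturbed parameter is within `ε` of the corresponding target
parameter, the input has ℓ¹ norm at most `M_x`, and the target hidden-unit activations
are bounded by `M_φ`, then the ℓ¹ distance between the perturbed and target network
outputs is at most `n·l·(γ̄·K_φ·(M_x + 1) + M_φ)·ε`. -/
theorem one_hidden_layer_perturbation_bound
    (n d l : ℕ) (hn : 1 ≤ n) (hd : 1 ≤ d) (hl : 1 ≤ l)
    (φ : ℝ → ℝ) (Kφ : ℝ) (hφ : ∀ s t : ℝ, |φ s - φ t| ≤ Kφ * |s - t|)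
    (Mx Mφ γbar ε : ℝ) (hMx : 0 < Mx) (hMφ : 0 < Mφ) (hγbar : 0 < γbar) (hε : 0 < ε)
    (A A' : Matrix (Fin l) (Fin n) ℝ) (B B' : Matrix (Fin n) (Fin d) ℝ) (b b' : Fin n → ℝ)
    (hA'bd : ∀ p i, |A' p i| ≤ γbar)
    (hA : ∀ p i, |A' p i - A p i| < ε)
    (hB : ∀ i q, |B' i q - B i q| < ε)
    (hb : ∀ i, |b' i - b i| < ε)
    (x : Fin d → ℝ) (hx : ∑ q, |x q| ≤ Mx)
    (hφbd : ∀ i, |φ (B.mulVec x i + b i)| ≤ Mφ) :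
    ∑ p, |A'.mulVec (fun i => φ (B'.mulVec x i + b' i)) p
          - A.mulVec (fun i => φ (B.mulVec x i + b i)) p|
      ≤ (n : ℝ) * l * (γbar * Kφ * (Mx + 1) + Mφ) * ε := by
  have hKφ : 0 ≤ Kφ := by
    have h := hφ 1 0
    have h0 := abs_nonneg (φ 1 - φ 0)
    simp at h
    linarith
  have key : ∀ i, |φ (B'.mulVec x i + b' i) - φ (B.mulVec x i + b i)|
      ≤ Kφ * (ε * (Mx + 1)) := by
    intro i
    refine le_trans (hφ _ _) (mul_le_mul_of_nonneg_left ?_ hKφ)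
    have h1 : |B'.mulVec x i - B.mulVec x i| ≤ ε * Mx := by
      have heq : B'.mulVec x i - B.mulVec x i = ∑ q, (B' i q - B i q) * x q := by
        simp [Matrix.mulVec, dotProduct, sub_mul, Finset.sum_sub_distrib]
      rw [heq]
      calc |∑ q, (B' i q - B i q) * x q| ≤ ∑ q, |(B' i q - B i q) * x q| :=
            Finset.abs_sum_le_sum_abs _ _
        _ ≤ ∑ q, ε * |x q| := by
            refine Finset.sum_le_sum fun q _ => ?_
            rw [abs_mul]
            exact mul_le_mul_of_nonneg_right (hB i q).le (abs_nonneg _)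
        _ = ε * ∑ q, |x q| := by rw [Finset.mul_sum]
        _ ≤ ε * Mx := mul_le_mul_of_nonneg_left hx hε.le
    have h2 := (hb i).le
    calc |(B'.mulVec x i + b' i) - (B.mulVec x i + b i)|
        = |(B'.mulVec x i - B.mulVec x i) + (b' i - b i)| := by ring_nf
      _ ≤ |B'.mulVec x i - B.mulVec x i| + |b' i - b i| := abs_add_le _ _
      _ ≤ ε * Mx + ε := add_le_add h1 h2
      _ = ε * (Mx + 1) := by ring
  have hp : ∀ p, |A'.mulVec (fun i => φ (B'.mulVec x i + b' i)) p
      - A.mulVec (fun i => φ (B.mulVec x i + b i)) p|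
      ≤ (n : ℝ) * ((γbar * Kφ * (Mx + 1) + Mφ) * ε) := by
    intro p
    have heq : A'.mulVec (fun i => φ (B'.mulVec x i + b' i)) p
        - A.mulVec (fun i => φ (B.mulVec x i + b i)) p
        = ∑ i, (A' p i * (φ (B'.mulVec x i + b' i) - φ (B.mulVec x i + b i))
            + (A' p i - A p i) * φ (B.mulVec x i + b i)) := by
      simp [Matrix.mulVec, dotProduct, mul_sub, sub_mul, Finset.sum_add_distrib,
        Finset.sum_sub_distrib]
    rw [heq]
    calc |∑ i, (A' p i * (φ (B'.mulVec x i + b' i) - φ (B.mulVec x i + b i))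
            + (A' p i - A p i) * φ (B.mulVec x i + b i))|
        ≤ ∑ i, |A' p i * (φ (B'.mulVec x i + b' i) - φ (B.mulVec x i + b i))
            + (A' p i - A p i) * φ (B.mulVec x i + b i)| := Finset.abs_sum_le_sum_abs _ _
      _ ≤ ∑ _i : Fin n, (γbar * Kφ * (Mx + 1) + Mφ) * ε := by
          refine Finset.sum_le_sum fun i _ => ?_
          have t1 : |A' p i * (φ (B'.mulVec x i + b' i) - φ (B.mulVec x i + b i))|
              ≤ γbar * (Kφ * (ε * (Mx + 1))) := by
            rw [abs_mul]
            exact mul_le_mul (hA'bd p i) (key i) (abs_nonneg _) hγbar.le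
          have t2 : |(A' p i - A p i) * φ (B.mulVec x i + b i)| ≤ ε * Mφ := by
            rw [abs_mul]
            exact mul_le_mul (hA p i).le (hφbd i) (abs_nonneg _) hε.le
          calc |A' p i * (φ (B'.mulVec x i + b' i) - φ (B.mulVec x i + b i))
                + (A' p i - A p i) * φ (B.mulVec x i + b i)|
              ≤ |A' p i * (φ (B'.mulVec x i + b' i) - φ (B.mulVec x i + b i))|
                + |(A' p i - A p i) * φ (B.mulVec x i + b i)| := abs_add_le _ _
            _ ≤ γbar * (Kφ * (ε * (Mx + 1))) + ε * Mφ := add_le_add t1 t2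
            _ = (γbar * Kφ * (Mx + 1) + Mφ) * ε := by ring
      _ = (n : ℝ) * ((γbar * Kφ * (Mx + 1) + Mφ) * ε) := by
          simp [Finset.sum_const]
  calc ∑ p, |A'.mulVec (fun i => φ (B'.mulVec x i + b' i)) p
          - A.mulVec (fun i => φ (B.mulVec x i + b i)) p|
      ≤ ∑ _p : Fin l, (n : ℝ) * ((γbar * Kφ * (Mx + 1) + Mφ) * ε) :=
        Finset.sum_le_sum fun p _ => hp p
    _ = (n : ℝ) * l * (γbar * Kφ * (Mx + 1) + Mφ) * ε := by
        simp [Finset.sum_const]; ring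
end

section
/- Universal approximation with full-rank output matrix: Let d, l ≥ 1 be natural numbers, let U ⊆ ℝ^d be compact, let h : ℝ^d → ℝ^l be continuous, and let ε > 0. Then there exist n ∈ ℕ with n ≥ l and parameters A ∈ ℝ^{l×n}, B ∈ ℝ^{n×d}, b ∈ ℝ^n such that the matrix A has rank l and ∫_U ‖h(x) − A·ReLU(Bx + b)‖ dx ≤ ε, where the integral is with respect to Lebesgue measure on ℝ^d. -/
open MeasureTheory

open Finset



open Finset in
lemma oneDim (φ : ℝ → ℝ) (hφ : Continuous φ) (a c : ℝ) (δ : ℝ) (hδ : 0 < δ) :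
    ∃ (m : ℕ) (c0 : ℝ) (γ t : ℕ → ℝ),
      ∀ s ∈ Set.Icc a c, |φ s - (c0 + ∑ j ∈ range m, γ j * relu (s - t j))| ≤ δ := by
  rcases le_or_gt c a with hca | hac
  · refine ⟨0, φ a, 0, 0, ?_⟩
    rintro s ⟨h1, h2⟩
    have : s = a := le_antisymm (h2.trans hca) h1
    simp [this, hδ.le]
  · have huc : UniformContinuousOn φ (Set.Icc a c) :=
      isCompact_Icc.uniformContinuousOn_of_continuous (hφ.continuousOn)
    rw [Metric.uniformContinuousOn_iff] at huc
    obtain ⟨r, hr, hmod⟩ := huc (δ/2) (by linarith)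
    obtain ⟨m, hm⟩ := exists_nat_gt ((c - a)/r)
    have hm0 : 0 < (m:ℝ) := lt_of_le_of_lt (div_nonneg (by linarith) hr.le) hm
    have hm0' : 0 < m := by exact_mod_cast hm0
    set Δ : ℝ := (c - a)/m with hΔdef
    have hΔ : 0 < Δ := div_pos (by linarith) hm0
    have hΔr : Δ < r := by
      rw [hΔdef, div_lt_iff₀ hm0]
      calc c - a = ((c-a)/r) * r := by field_simp
      _ < m * r := mul_lt_mul_of_pos_right hm hr
      _ = r * m := by ring
    set t : ℕ → ℝ := fun j => a + j * Δ with ht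
    have htmono : ∀ {j j' : ℕ}, j ≤ j' → t j ≤ t j' := by
      intro j j' hj
      simp only [ht, add_le_add_iff_left]
      exact mul_le_mul_of_nonneg_right (by exact_mod_cast hj) hΔ.le
    have htm : t m = c := by
      show a + (m:ℝ) * Δ = c
      rw [hΔdef]
      field_simp
      ring
    have htIcc : ∀ {j : ℕ}, j ≤ m → t j ∈ Set.Icc a c := by
      intro j hj
      constructor
      · have : 0 ≤ (j:ℝ) * Δ := by positivity
        show a ≤ a + (j:ℝ) * Δ
        linarith
      · rw [← htm]; exact htmono hj
    set sl : ℕ → ℝ := fun j => (φ (t (j+1)) - φ (t j)) / Δ with hsl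
    set γ : ℕ → ℝ := fun j => Nat.rec (sl 0) (fun j _ => sl (j+1) - sl j) j with hγ
    have hγ0 : γ 0 = sl 0 := rfl
    have hγs : ∀ j, γ (j+1) = sl (j+1) - sl j := fun j => rfl
    have htd : ∀ j, t (j+1) - t j = Δ := by intro j; simp [ht]; ring
    have hslk : ∀ j, sl j * Δ = φ (t (j+1)) - φ (t j) := by
      intro j; rw [hsl]; field_simp
    have key : ∀ (k : ℕ) (s : ℝ), ∑ j ∈ range (k+1), γ j * (s - t j)
        = sl k * (s - t k) + (φ (t k) - φ (t 0)) := by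
      intro k s
      induction k with
      | zero => simp [hγ0]
      | succ k ih =>
        rw [Finset.sum_range_succ, ih, hγs]
        linear_combination (sl k) * (htd k) + hslk k
    refine ⟨m, φ a, γ, t, ?_⟩
    rintro s ⟨hs1, hs2⟩
    set u : ℝ := (s - a)/Δ with hu
    have hu0 : 0 ≤ u := div_nonneg (by linarith) hΔ.le
    set k : ℕ := min ⌊u⌋₊ (m-1) with hk
    have hkm : k ≤ m - 1 := min_le_right _ _
    have hk1m : k + 1 ≤ m := by omega
    have hsu : s = a + u * Δ := by rw [hu]; field_simp; ring
    have htk_le : t k ≤ s := by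
      rcases le_or_gt (⌊u⌋₊) (m-1) with hcase | hcase
      · have hkf : k = ⌊u⌋₊ := min_eq_left hcase
        have : (k:ℝ) ≤ u := by rw [hkf]; exact Nat.floor_le hu0
        simp only [ht, hsu]
        nlinarith
      · have hkf : k = m - 1 := min_eq_right hcase.le
        have hmu : (m:ℝ) ≤ u := by
          have : m ≤ ⌊u⌋₊ := by omega
          calc (m:ℝ) ≤ (⌊u⌋₊ : ℝ) := by exact_mod_cast this
          _ ≤ u := Nat.floor_le hu0
        have : (k:ℝ) ≤ u := le_trans (by exact_mod_cast (by omega : k ≤ m)) hmu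
        simp only [ht, hsu]; nlinarith
    have hs_le : s ≤ t (k+1) := by
      rcases le_or_gt (⌊u⌋₊) (m-1) with hcase | hcase
      · have hkf : k = ⌊u⌋₊ := min_eq_left hcase
        have : u < (k:ℝ) + 1 := by rw [hkf]; exact Nat.lt_floor_add_one u
        simp only [ht, hsu]; push_cast; nlinarith
      · have hkf : k = m - 1 := min_eq_right hcase.le
        have : k + 1 = m := by omega
        rw [this, htm]; exact hs2
    have hsum : ∑ j ∈ range m, γ j * relu (s - t j)
        = ∑ j ∈ range (k+1), γ j * (s - t j) := by
      rw [← Finset.sum_subset (Finset.range_subset_range.mpr hk1m)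
        (by
          intro j hj hj'
          simp only [Finset.mem_range] at hj hj'
          have : t (k+1) ≤ t j := htmono (by omega)
          have : relu (s - t j) = 0 := by
            simp only [relu, max_eq_right_iff]; linarith [hs_le]
          rw [this, mul_zero])]
      refine Finset.sum_congr rfl ?_
      intro j hj
      simp only [Finset.mem_range] at hj
      have : t j ≤ s := le_trans (htmono (by omega)) htk_le
      have : relu (s - t j) = s - t j := by
        simp only [relu, max_eq_left_iff]; linarith
      rw [this]
    rw [hsum, key k s]
    have ht0 : t 0 = a := by simp [ht]
    have hstk : s - t k ≤ Δ := by
      have := htd k; linarith [hs_le]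
    have hb1 : |φ s - φ (t k)| < δ/2 := by
      have h1 : dist s (t k) < r := by
        rw [Real.dist_eq, abs_of_nonneg (by linarith [htk_le])]; linarith
      have := hmod s ⟨hs1, hs2⟩ (t k) (htIcc (by omega)) h1
      rwa [Real.dist_eq] at this
    have hb2 : |sl k| * (s - t k) ≤ |φ (t (k+1)) - φ (t k)| := by
      calc |sl k| * (s - t k) ≤ |sl k| * Δ :=
            mul_le_mul_of_nonneg_left hstk (abs_nonneg _)
      _ = |sl k * Δ| := by rw [abs_mul, abs_of_pos hΔ]
      _ = _ := by rw [hslk k]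
    have hb3 : |φ (t (k+1)) - φ (t k)| < δ/2 := by
      have h1 : dist (t (k+1)) (t k) < r := by
        rw [Real.dist_eq, htd k, abs_of_pos hΔ]; exact hΔr
      have := hmod (t (k+1)) (htIcc hk1m) (t k) (htIcc (by omega)) h1
      rwa [Real.dist_eq] at this
    have : |φ s - (φ a + (sl k * (s - t k) + (φ (t k) - φ (t 0))))|
        ≤ |φ s - φ (t k)| + |sl k| * (s - t k) := by
      rw [ht0]
      have habs : |sl k * (s - t k)| = |sl k| * (s - t k) := by
        rw [abs_mul]; congr 1; exact abs_of_nonneg (by linarith [htk_le])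
      calc |φ s - (φ a + (sl k * (s - t k) + (φ (t k) - φ a)))|
          = |(φ s - φ (t k)) - sl k * (s - t k)| := by ring_nf
      _ ≤ |φ s - φ (t k)| + |sl k * (s - t k)| := abs_sub _ _
      _ = _ := by rw [habs]
    linarith

open Finset

variable {d : ℕ}

noncomputable def net (cc : ℕ → ℝ) (w : ℕ → Fin d → ℝ) (bb : ℕ → ℝ) (m : ℕ)
    (x : Fin d → ℝ) : ℝ :=
  ∑ j ∈ range m, cc j * relu ((∑ i, w j i * x i) + bb j)

def Approx (U : Set (Fin d → ℝ)) (g : (Fin d → ℝ) → ℝ) : Prop :=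
  ∀ δ : ℝ, 0 < δ → ∃ (m : ℕ) (cc : ℕ → ℝ) (w : ℕ → Fin d → ℝ) (bb : ℕ → ℝ),
    ∀ x ∈ U, |g x - net cc w bb m x| ≤ δ

lemma approx_zero (U : Set (Fin d → ℝ)) : Approx U 0 := by
  intro δ hδ
  exact ⟨0, 0, 0, 0, fun x _ => by simp [net, hδ.le]⟩

lemma approx_add {U : Set (Fin d → ℝ)} {g1 g2 : (Fin d → ℝ) → ℝ}
    (h1 : Approx U g1) (h2 : Approx U g2) : Approx U (g1 + g2) := by
  intro δ hδ
  obtain ⟨m1, cc1, w1, bb1, hb1⟩ := h1 (δ/2) (by linarith)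
  obtain ⟨m2, cc2, w2, bb2, hb2⟩ := h2 (δ/2) (by linarith)
  refine ⟨m1 + m2, fun j => if j < m1 then cc1 j else cc2 (j - m1),
    fun j => if j < m1 then w1 j else w2 (j - m1),
    fun j => if j < m1 then bb1 j else bb2 (j - m1), ?_⟩
  intro x hx
  have hnet : net (fun j => if j < m1 then cc1 j else cc2 (j - m1))
      (fun j => if j < m1 then w1 j else w2 (j - m1))
      (fun j => if j < m1 then bb1 j else bb2 (j - m1)) (m1 + m2) x
      = net cc1 w1 bb1 m1 x + net cc2 w2 bb2 m2 x := by
    unfold net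
    rw [Finset.sum_range_add]
    congr 1
    · refine Finset.sum_congr rfl fun j hj => ?_
      simp only [Finset.mem_range] at hj
      simp [hj]
    · refine Finset.sum_congr rfl fun j hj => ?_
      have : ¬ (m1 + j < m1) := by omega
      simp [this]
  rw [hnet]
  calc |(g1 + g2) x - (net cc1 w1 bb1 m1 x + net cc2 w2 bb2 m2 x)|
      = |(g1 x - net cc1 w1 bb1 m1 x) + (g2 x - net cc2 w2 bb2 m2 x)| := by
        simp only [Pi.add_apply]; ring_nf
    _ ≤ |g1 x - net cc1 w1 bb1 m1 x| + |g2 x - net cc2 w2 bb2 m2 x| := abs_add_le _ _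
    _ ≤ δ/2 + δ/2 := add_le_add (hb1 x hx) (hb2 x hx)
    _ = δ := by ring

lemma approx_smul {U : Set (Fin d → ℝ)} {g : (Fin d → ℝ) → ℝ} (r : ℝ)
    (hg : Approx U g) : Approx U (r • g) := by
  intro δ hδ
  obtain ⟨m, cc, w, bb, hb⟩ := hg (δ/(|r|+1)) (by positivity)
  refine ⟨m, fun j => r * cc j, w, bb, ?_⟩
  intro x hx
  have hnet : net (fun j => r * cc j) w bb m x = r * net cc w bb m x := by
    unfold net
    rw [Finset.mul_sum]
    exact Finset.sum_congr rfl fun j _ => by ring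
  rw [hnet]
  have : |r • g x - r * net cc w bb m x| = |r| * |g x - net cc w bb m x| := by
    rw [← abs_mul]; congr 1; simp [smul_eq_mul]; ring
  rw [Pi.smul_apply] at *
  rw [this]
  calc |r| * |g x - net cc w bb m x| ≤ |r| * (δ/(|r|+1)) :=
        mul_le_mul_of_nonneg_left (hb x hx) (abs_nonneg r)
    _ ≤ δ := by
        rw [mul_div_assoc', div_le_iff₀ (by positivity : (0:ℝ) < |r|+1)]
        nlinarith [abs_nonneg r, hδ.le]

lemma approx_cos {U : Set (Fin d → ℝ)} (hU : IsCompact U) (w : Fin d → ℝ) (b : ℝ) :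
    Approx U (fun x => Real.cos ((∑ i, w i * x i) + b)) := by
  intro δ hδ
  have hcont : ContinuousOn (fun x : Fin d → ℝ => (∑ i, w i * x i) + b) U := by
    fun_prop
  obtain ⟨C, hC⟩ := hU.exists_bound_of_continuousOn hcont
  obtain ⟨m, c0, γ, t, hone⟩ := oneDim Real.cos Real.continuous_cos (-C) C δ hδ
  refine ⟨m + 1,
    fun j => Nat.rec c0 (fun j _ => γ j) j,
    fun j => Nat.rec 0 (fun _ _ => w) j,
    fun j => Nat.rec 1 (fun j _ => b - t j) j, ?_⟩
  intro x hx
  have hs : (∑ i, w i * x i) + b ∈ Set.Icc (-C) C := by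
    have := hC x hx
    rw [Real.norm_eq_abs, abs_le] at this
    exact this
  have hnet : net (fun j => Nat.rec c0 (fun j _ => γ j) j)
      (fun j => Nat.rec 0 (fun _ _ => w) j)
      (fun j => Nat.rec 1 (fun j _ => b - t j) j) (m+1) x
      = c0 + ∑ j ∈ range m, γ j * relu (((∑ i, w i * x i) + b) - t j) := by
    unfold net
    rw [Finset.sum_range_succ']
    rw [add_comm]
    congr 1
    · show c0 * relu ((∑ i, (0:Fin d → ℝ) i * x i) + 1) = c0
      simp [relu]
    · refine Finset.sum_congr rfl fun j _ => ?_
      show γ j * relu ((∑ i, w i * x i) + (b - t j)) = _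
      congr 2
      ring
  rw [hnet]
  exact hone _ hs

open Classical in
noncomputable def extOn (U : Set (Fin d → ℝ)) (f : C(↥U,ℝ)) : (Fin d → ℝ) → ℝ :=
  fun x => if hx : x ∈ U then f ⟨x, hx⟩ else 0

lemma extOn_apply {U : Set (Fin d → ℝ)} (f : C(↥U,ℝ)) {x : Fin d → ℝ} (hx : x ∈ U) :
    extOn U f x = f ⟨x, hx⟩ := by simp [extOn, hx]

lemma extOn_zero (U : Set (Fin d → ℝ)) : extOn U 0 = 0 := by
  funext x; by_cases hx : x ∈ U <;> simp [extOn, hx]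

lemma extOn_add (U : Set (Fin d → ℝ)) (f g : C(↥U,ℝ)) :
    extOn U (f + g) = extOn U f + extOn U g := by
  funext x; by_cases hx : x ∈ U <;> simp [extOn, hx]

lemma extOn_smul (U : Set (Fin d → ℝ)) (r : ℝ) (f : C(↥U,ℝ)) :
    extOn U (r • f) = r • extOn U f := by
  funext x; by_cases hx : x ∈ U <;> simp [extOn, hx]

lemma approx_congr {U : Set (Fin d → ℝ)} {g1 g2 : (Fin d → ℝ) → ℝ}
    (hcong : ∀ x ∈ U, g1 x = g2 x) (hg : Approx U g1) : Approx U g2 := by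
  intro δ hδ
  obtain ⟨m, cc, w, bb, hb⟩ := hg δ hδ
  exact ⟨m, cc, w, bb, fun x hx => by rw [← hcong x hx]; exact hb x hx⟩

lemma cos_affine_continuous (U : Set (Fin d → ℝ)) (w : Fin d → ℝ) (b : ℝ) :
    Continuous (fun x : ↥U => Real.cos ((∑ i, w i * (x : Fin d → ℝ) i) + b)) := by
  apply Real.continuous_cos.comp
  apply Continuous.add _ continuous_const
  apply continuous_finset_sum
  intro i _
  exact continuous_const.mul ((continuous_apply i).comp continuous_subtype_val)

lemma approx_all {U : Set (Fin d → ℝ)} (hU : IsCompact U)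
    (g : (Fin d → ℝ) → ℝ) (hg : Continuous g) : Approx U g := by
  haveI : CompactSpace ↥U := isCompact_iff_compactSpace.mp hU
  -- generators
  set gen : Set C(↥U, ℝ) :=
    {f | ∃ (w : Fin d → ℝ) (b : ℝ), f = ContinuousMap.mk
      (fun x : ↥U => Real.cos ((∑ i, w i * (x : Fin d → ℝ) i) + b))
      (cos_affine_continuous U w b)} with hgen
  set T : Submodule ℝ C(↥U, ℝ) := Submodule.span ℝ gen with hT
  have hone : (1 : C(↥U,ℝ)) ∈ T := by
    apply Submodule.subset_span
    refine ⟨0, 0, ?_⟩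
    ext x
    simp
  have hmulgen : ∀ f1 ∈ gen, ∀ f2 ∈ gen, f1 * f2 ∈ T := by
    rintro _ ⟨w1, b1, rfl⟩ _ ⟨w2, b2, rfl⟩
    have heq : (ContinuousMap.mk
        (fun x : ↥U => Real.cos ((∑ i, w1 i * (x : Fin d → ℝ) i) + b1))
          (cos_affine_continuous U w1 b1)) *
        (ContinuousMap.mk
        (fun x : ↥U => Real.cos ((∑ i, w2 i * (x : Fin d → ℝ) i) + b2))
          (cos_affine_continuous U w2 b2))
        = (1/2 : ℝ) • (ContinuousMap.mk
            (fun x : ↥U => Real.cos ((∑ i, (w1 + w2) i * (x : Fin d → ℝ) i) + (b1 + b2)))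
            (cos_affine_continuous U (w1+w2) (b1+b2)))
        + (1/2 : ℝ) • (ContinuousMap.mk
            (fun x : ↥U => Real.cos ((∑ i, (w1 - w2) i * (x : Fin d → ℝ) i) + (b1 - b2)))
            (cos_affine_continuous U (w1-w2) (b1-b2))) := by
      ext x
      simp only [ContinuousMap.mul_apply, ContinuousMap.add_apply, ContinuousMap.smul_apply,
        ContinuousMap.coe_mk, smul_eq_mul, Pi.add_apply, Pi.sub_apply]
      have e1 : ∑ i, (w1 i + w2 i) * (x : Fin d → ℝ) i
          = (∑ i, w1 i * (x : Fin d → ℝ) i) + ∑ i, w2 i * (x : Fin d → ℝ) i := by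
        rw [← Finset.sum_add_distrib]; exact Finset.sum_congr rfl fun i _ => by ring
      have e2 : ∑ i, (w1 i - w2 i) * (x : Fin d → ℝ) i
          = (∑ i, w1 i * (x : Fin d → ℝ) i) - ∑ i, w2 i * (x : Fin d → ℝ) i := by
        rw [← Finset.sum_sub_distrib]; exact Finset.sum_congr rfl fun i _ => by ring
      have key : ∀ A B : ℝ, Real.cos A * Real.cos B
          = 1/2 * Real.cos (A+B) + 1/2 * Real.cos (A-B) := by
        intro A B; rw [Real.cos_add, Real.cos_sub]; ring
      rw [e1, e2]
      set u := ∑ i, w1 i * (x : Fin d → ℝ) i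
      set v := ∑ i, w2 i * (x : Fin d → ℝ) i
      have h5 : u + v + (b1 + b2) = (u + b1) + (v + b2) := by ring
      have h6 : u - v + (b1 - b2) = (u + b1) - (v + b2) := by ring
      rw [h5, h6, key]
    rw [heq]
    exact Submodule.add_mem _
      (Submodule.smul_mem _ _ (Submodule.subset_span ⟨w1 + w2, b1 + b2, rfl⟩))
      (Submodule.smul_mem _ _ (Submodule.subset_span ⟨w1 - w2, b1 - b2, rfl⟩))
  have hmul : ∀ f1 f2 : C(↥U,ℝ), f1 ∈ T → f2 ∈ T → f1 * f2 ∈ T := by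
    intro f1 f2 h1 h2
    induction h1, h2 using Submodule.span_induction₂ with
    | mem_mem x y hx hy => exact hmulgen x hx y hy
    | zero_left y hy => rw [zero_mul]; exact T.zero_mem
    | zero_right x hx => rw [mul_zero]; exact T.zero_mem
    | add_left x y z hx hy hz h1 h2 => rw [add_mul]; exact T.add_mem h1 h2
    | add_right x y z hx hy hz h1 h2 => rw [mul_add]; exact T.add_mem h1 h2
    | smul_left r x y hx hy h1 => rw [smul_mul_assoc]; exact T.smul_mem r h1
    | smul_right r x y hx hy h1 => rw [mul_smul_comm]; exact T.smul_mem r h1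
  set TA : Subalgebra ℝ C(↥U,ℝ) := T.toSubalgebra hone hmul with hTA
  have hsep : TA.SeparatesPoints := by
    intro x y hxy
    have hvne : (x : Fin d → ℝ) ≠ (y : Fin d → ℝ) := fun hc => hxy (Subtype.ext hc)
    obtain ⟨i, hi⟩ := Function.ne_iff.mp hvne
    set r : ℝ := Real.pi / ((x : Fin d → ℝ) i - (y : Fin d → ℝ) i) with hr
    set w : Fin d → ℝ := fun i' => if i' = i then r else 0 with hw
    set b : ℝ := - (r * (y : Fin d → ℝ) i) with hb
    refine ⟨_, ⟨ContinuousMap.mk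
      (fun x : ↥U => Real.cos ((∑ i', w i' * (x : Fin d → ℝ) i') + b))
      (cos_affine_continuous U w b),
      Submodule.subset_span ⟨w, b, rfl⟩, rfl⟩, ?_⟩
    have hsum : ∀ z : ↥U, ∑ i', w i' * (z : Fin d → ℝ) i' = r * (z : Fin d → ℝ) i := by
      intro z
      rw [hw]
      rw [Finset.sum_eq_single i]
      · simp
      · intro j _ hj; simp [hj]
      · simp
    simp only [ContinuousMap.coe_mk, hsum]
    have hsub : (x : Fin d → ℝ) i - (y : Fin d → ℝ) i ≠ 0 := sub_ne_zero.mpr hi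
    have hx1 : r * (x : Fin d → ℝ) i + b = Real.pi := by
      rw [hb, hr]; field_simp; ring
    have hy1 : r * (y : Fin d → ℝ) i + b = 0 := by rw [hb]; ring
    rw [hx1, hy1, Real.cos_pi, Real.cos_zero]
    norm_num
  -- now approximate
  intro δ hδ
  set f : C(↥U, ℝ) := ContinuousMap.mk (fun x : ↥U => g x) (by fun_prop) with hf
  obtain ⟨g', hg'⟩ := ContinuousMap.exists_mem_subalgebra_near_continuousMap_of_separatesPoints
    TA hsep f (δ/2) (by linarith)
  -- g'.1 ∈ T, so it is Approx
  have hT' : ∀ f' : C(↥U,ℝ), f' ∈ T → Approx U (extOn U f') := by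
    intro f' hf'
    induction hf' using Submodule.span_induction with
    | mem f'' hf'' =>
      obtain ⟨w, b, rfl⟩ := hf''
      refine approx_congr (g1 := fun x => Real.cos ((∑ i, w i * x i) + b)) ?_ (approx_cos hU w b)
      intro x hx
      rw [extOn_apply _ hx]
      rfl
    | zero => rw [extOn_zero]; exact approx_zero U
    | add f1 f2 h1 h2 ih1 ih2 => rw [extOn_add]; exact approx_add ih1 ih2
    | smul r f1 h1 ih1 => rw [extOn_smul]; exact approx_smul r ih1
  have happrox := hT' g'.1 g'.2 (δ/2) (by linarith)
  obtain ⟨m, cc, w, bb, hbnd⟩ := happrox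
  refine ⟨m, cc, w, bb, ?_⟩
  intro x hx
  have h1 : |g x - (g'.1 : C(↥U,ℝ)) ⟨x, hx⟩| ≤ δ/2 := by
    have h2 := ContinuousMap.dist_apply_le_dist (f := (g'.1 : C(↥U,ℝ))) (g := f) (⟨x, hx⟩ : ↥U)
    have h3 : dist ((g'.1 : C(↥U,ℝ)) ⟨x, hx⟩) (f ⟨x, hx⟩) ≤ δ/2 := by
      rw [← dist_eq_norm] at hg'
      exact h2.trans hg'.le
    rw [Real.dist_eq] at h3
    have : f (⟨x, hx⟩ : ↥U) = g x := rfl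
    rw [this] at h3
    rw [abs_sub_comm] at h3
    exact h3
  have h2 := hbnd x hx
  rw [extOn_apply _ hx] at h2
  calc |g x - net cc w bb m x|
      ≤ |g x - (g'.1 : C(↥U,ℝ)) ⟨x, hx⟩| + |(g'.1 : C(↥U,ℝ)) ⟨x, hx⟩ - net cc w bb m x| := by
        have := abs_sub_le (g x) ((g'.1 : C(↥U,ℝ)) ⟨x, hx⟩) (net cc w bb m x)
        exact this
    _ ≤ δ/2 + δ/2 := add_le_add h1 h2
    _ = δ := by ring

lemma net_def {d : ℕ} (cc : ℕ → ℝ) (w : ℕ → Fin d → ℝ) (bb : ℕ → ℝ) (m : ℕ) (x : Fin d → ℝ) :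
    net cc w bb m x = ∑ j ∈ range m, cc j * relu ((∑ i, w j i * x i) + bb j) := rfl

lemma relu_zero : relu 0 = 0 := by simp [relu]

lemma relu_continuous : Continuous relu := continuous_id.max continuous_const


/-- Universal approximation with full-rank output matrix: any continuous `h : ℝ^d → ℝ^l`
can be approximated on a compact `U` to within `ε` in `L¹` (with the ℓ¹ norm on the
output) by a one-hidden-layer ReLU network with `n ≥ l` hidden units whose output matrix
`A` has rank `l`. -/
theorem universal_approx_full_rank_output
    (d l : ℕ) (hd : 1 ≤ d) (hl : 1 ≤ l)
    (U : Set (Fin d → ℝ)) (hU : IsCompact U)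
    (h : (Fin d → ℝ) → Fin l → ℝ) (hh : Continuous h)
    (ε : ℝ) (hε : 0 < ε) :
    ∃ (n : ℕ) (A : Matrix (Fin l) (Fin n) ℝ) (B : Matrix (Fin n) (Fin d) ℝ) (b : Fin n → ℝ),
      l ≤ n ∧ A.rank = l ∧
      (∫ x in U, ∑ p, |h x p - A.mulVec (fun i => relu (B.mulVec x i + b i)) p|) ≤ ε := by
  classical
  set V : ℝ := (volume U).toReal with hV
  have hV0 : 0 ≤ V := ENNReal.toReal_nonneg
  have hl0 : 0 < (l:ℝ) := by exact_mod_cast hl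
  set δ : ℝ := ε / ((l:ℝ) * (V + 1)) with hδdef
  have hδ : 0 < δ := by positivity
  -- componentwise networks
  have hcomp : ∀ p : Fin l, ∃ (m : ℕ) (cc : ℕ → ℝ) (w : ℕ → Fin d → ℝ) (bb : ℕ → ℝ),
      ∀ x ∈ U, |h x p - net cc w bb m x| ≤ δ := by
    intro p
    exact approx_all hU (fun x => h x p) ((continuous_apply p).comp hh) δ hδ
  choose m cc w bb hbnd using hcomp
  set M : ℕ := Finset.univ.sup m with hM
  have hmM : ∀ p, m p ≤ M := fun p => Finset.le_sup (Finset.mem_univ p)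
  -- padded coefficients
  set cc' : Fin l → ℕ → ℝ := fun p j => if j < m p then cc p j else 0 with hcc'
  have hpad : ∀ p, ∀ x ∈ U, |h x p - net (cc' p) (w p) (bb p) M x| ≤ δ := by
    intro p x hx
    have : net (cc' p) (w p) (bb p) M x = net (cc p) (w p) (bb p) (m p) x := by
      rw [net_def, net_def]
      rw [← Finset.sum_subset (Finset.range_subset_range.mpr (hmM p))]
      · refine Finset.sum_congr rfl fun j hj => ?_
        simp only [Finset.mem_range] at hj
        simp [hcc', hj]
      · intro j _ hj
        simp only [Finset.mem_range, not_lt] at hj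
        simp [hcc', Nat.not_lt.mpr hj]
    rw [this]
    exact hbnd p x hx
  -- index type and equivalence
  set n : ℕ := l * M + l with hn
  set e : (Fin l × Fin M) ⊕ Fin l ≃ Fin n :=
    (Equiv.sumCongr finProdFinEquiv (Equiv.refl (Fin l))).trans finSumFinEquiv with he
  set Aι : Fin l → ((Fin l × Fin M) ⊕ Fin l) → ℝ :=
    fun p k => Sum.elim (fun qj : Fin l × Fin M => if qj.1 = p then cc' qj.1 qj.2 else 0)
      (fun q : Fin l => if q = p then 1 else 0) k with hAι
  set Bι : ((Fin l × Fin M) ⊕ Fin l) → Fin d → ℝ :=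
    fun k => Sum.elim (fun qj : Fin l × Fin M => w qj.1 qj.2) (fun _ => 0) k with hBι
  set bι : ((Fin l × Fin M) ⊕ Fin l) → ℝ :=
    fun k => Sum.elim (fun qj : Fin l × Fin M => bb qj.1 qj.2) (fun _ => 0) k with hbι
  refine ⟨n, Matrix.of fun p k => Aι p (e.symm k),
    Matrix.of fun k i => Bι (e.symm k) i, fun k => bι (e.symm k), ?_, ?_, ?_⟩
  · omega
  · -- rank
    have hsurj : Function.Surjective
        (Matrix.of fun p k => Aι p (e.symm k) : Matrix (Fin l) (Fin n) ℝ).mulVecLin := by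
      intro u
      refine ⟨fun k => Sum.elim (fun _ : Fin l × Fin M => (0:ℝ)) (fun q => u q) (e.symm k), ?_⟩
      funext p
      show ∑ k : Fin n, Aι p (e.symm k) *
        Sum.elim (fun _ : Fin l × Fin M => (0:ℝ)) (fun q => u q) (e.symm k) = u p
      rw [Equiv.sum_comp e.symm
        (fun j => Aι p j * Sum.elim (fun _ : Fin l × Fin M => (0:ℝ)) (fun q => u q) j)]
      rw [Fintype.sum_sum_type]
      simp only [Sum.elim_inl, Sum.elim_inr, mul_zero, Finset.sum_const_zero, zero_add, hAι]
      rw [Finset.sum_eq_single p]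
      · simp
      · intro q _ hq; simp [hq]
      · simp
    rw [Matrix.rank, LinearMap.range_eq_top.mpr hsurj]
    simp
  · -- integral bound
    set A : Matrix (Fin l) (Fin n) ℝ := Matrix.of fun p k => Aι p (e.symm k) with hA
    set B : Matrix (Fin n) (Fin d) ℝ := Matrix.of fun k i => Bι (e.symm k) i with hB
    set b : Fin n → ℝ := fun k => bι (e.symm k) with hb
    have hNeq : ∀ (p : Fin l) (x : Fin d → ℝ),
        A.mulVec (fun i => relu (B.mulVec x i + b i)) p
          = net (cc' p) (w p) (bb p) M x := by
      intro p x
      show ∑ k : Fin n, A p k * relu ((∑ i, B k i * x i) + b k) = _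
      have : ∀ k : Fin n, A p k * relu ((∑ i, B k i * x i) + b k)
          = (fun j => Aι p j * relu ((∑ i, Bι j i * x i) + bι j)) (e.symm k) := by
        intro k; rfl
      rw [Finset.sum_congr rfl (fun k _ => this k)]
      rw [Equiv.sum_comp e.symm (fun j => Aι p j * relu ((∑ i, Bι j i * x i) + bι j))]
      rw [Fintype.sum_sum_type]
      have hinr : ∑ q : Fin l,
          Aι p (Sum.inr q) * relu ((∑ i, Bι (Sum.inr q) i * x i) + bι (Sum.inr q)) = 0 := by
        apply Finset.sum_eq_zero
        intro q _
        have : ((∑ i, Bι (Sum.inr q) i * x i) + bι (Sum.inr q)) = 0 := by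
          simp [hBι, hbι]
        rw [this, relu_zero, mul_zero]
      rw [hinr, add_zero]
      rw [Fintype.sum_prod_type]
      rw [Finset.sum_eq_single p]
      · have : ∀ j : Fin M, Aι p (Sum.inl (p, j))
            * relu ((∑ i, Bι (Sum.inl (p, j)) i * x i) + bι (Sum.inl (p, j)))
            = (fun jj : ℕ => cc' p jj * relu ((∑ i, w p jj i * x i) + bb p jj)) (j : ℕ) := by
          intro j; simp [hAι, hBι, hbι]
        rw [Finset.sum_congr rfl (fun j _ => this j)]
        rw [Fin.sum_univ_eq_sum_range (fun jj : ℕ =>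
          cc' p jj * relu ((∑ i, w p jj i * x i) + bb p jj)) M]
        rw [net_def]
      · intro q _ hq
        apply Finset.sum_eq_zero
        intro j _
        simp [hAι, hq]
      · simp
    have netcont : ∀ p : Fin l,
        Continuous (fun x => A.mulVec (fun i => relu (B.mulVec x i + b i)) p) := by
      intro p
      have hrfl : (fun x => A.mulVec (fun i => relu (B.mulVec x i + b i)) p)
          = fun x : Fin d → ℝ => ∑ k : Fin n, A p k * relu ((∑ i, B k i * x i) + b k) := rfl
      rw [hrfl]
      apply continuous_finset_sum
      intro k _
      apply Continuous.mul continuous_const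
      apply relu_continuous.comp
      apply Continuous.add _ continuous_const
      apply continuous_finset_sum
      intro i _
      exact continuous_const.mul (continuous_apply i)
    have hGcont : Continuous (fun x =>
        ∑ p, |h x p - A.mulVec (fun i => relu (B.mulVec x i + b i)) p|) := by
      apply continuous_finset_sum
      intro p _
      exact (((continuous_apply p).comp hh).sub (netcont p)).abs
    have hle : ∀ x ∈ U, (∑ p, |h x p - A.mulVec (fun i => relu (B.mulVec x i + b i)) p|)
        ≤ (l:ℝ) * δ := by
      intro x hx
      calc ∑ p, |h x p - A.mulVec (fun i => relu (B.mulVec x i + b i)) p|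
          ≤ ∑ _p : Fin l, δ := by
            apply Finset.sum_le_sum
            intro p _
            rw [hNeq p x]
            exact hpad p x hx
        _ = (l:ℝ) * δ := by
            rw [Finset.sum_const, Finset.card_univ, Fintype.card_fin, nsmul_eq_mul]
    calc (∫ x in U, ∑ p, |h x p - A.mulVec (fun i => relu (B.mulVec x i + b i)) p|)
        ≤ ∫ _x in U, (l:ℝ) * δ := by
          apply setIntegral_mono_on
          · exact hGcont.continuousOn.integrableOn_compact hU
          · exact integrableOn_const hU.measure_lt_top.ne
          · exact hU.measurableSet
          · exact hle
      _ = V * ((l:ℝ) * δ) := by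
          rw [setIntegral_const, smul_eq_mul]; rfl
      _ ≤ ε := by
          have heq2 : V * ((l:ℝ) * δ) = ε * (V/(V+1)) := by
            rw [hδdef]; field_simp
          rw [heq2]
          have : V/(V+1) ≤ 1 := by
            rw [div_le_one (by linarith)]; linarith
          nlinarith
end

section
/- Output perturbation bound for recurrent networks (Lemma B.5 of the paper, output part): Under the hypotheses of the hidden-state perturbation bound — namely α ≥ 0, β > 0, φ : ℝ → ℝ Lipschitz with constant K_φ, ε ∈ (0,1], γ̄, R_r, R_x > 0, R̃ = R_x + R_r + 1, entrywise bounds |W'_{i,j}| ≤ γ̄, entrywise differences |W' − W| < ε, |B' − B| < ε, |b' − b| < ε, inputs ‖x_t‖ ≤ R_x, reference trajectory r_t = −α r_{t−1} + β·φ(W r_{t−1} + B x_{t−1} + b) with ‖r_t‖ ≤ R_r for 0 ≤ t ≤ T−1 and perturbed trajectory r'_t = −α r'_{t−1} + β·φ(W' r'_{t−1} + B' x_{t−1} + b') with r'_0 = r_0 — suppose additionally that C, C' ∈ ℝ^{l×n} satisfy |C'_{p,i}| ≤ γ̄ and |C'_{p,i} − C_{p,i}| < ε for all indices, and ‖r_t‖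 ≤ R_r for 0 ≤ t ≤ T. Then Σ_{t=1}^{T} ‖C' r'_t − C r_t‖ ≤ l·T·(γ̄·n·β·K_φ·R̃·Σ_{j=0}^{T−1}(α + β·K_φ·n·γ̄)^j + R_r)·ε. -/
/-- Hidden-state trajectory of the RNN
`r_t = -α r_{t-1} + β · φ (W r_{t-1} + B x_{t-1} + b)` (with activation `φ` applied
entrywise) started at `r0`. -/
def rnnTrajP {n d : ℕ} (φ : ℝ → ℝ) (α β : ℝ) (W : Matrix (Fin n) (Fin n) ℝ)
    (B : Matrix (Fin n) (Fin d) ℝ) (b : Fin n → ℝ)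
    (x : ℕ → Fin d → ℝ) (r0 : Fin n → ℝ) : ℕ → Fin n → ℝ
  | 0 => r0
  | t + 1 => fun i =>
      -α * rnnTrajP φ α β W B b x r0 t i
        + β * φ (W.mulVec (rnnTrajP φ α β W B b x r0 t) i + B.mulVec (x t) i + b i)

lemma sum_abs_mulVec_le {m n : ℕ} (M : Matrix (Fin m) (Fin n) ℝ) (v : Fin n → ℝ) (γ : ℝ)
    (hM : ∀ i j, |M i j| ≤ γ) :
    ∑ i, |M.mulVec v i| ≤ (m : ℝ) * γ * ∑ j, |v j| := by
  have h1 : ∀ i : Fin m, |M.mulVec v i| ≤ ∑ j, γ * |v j| := by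
    intro i
    calc |M.mulVec v i| = |∑ j, M i j * v j| := by
          simp [Matrix.mulVec, dotProduct]
      _ ≤ ∑ j, |M i j * v j| := Finset.abs_sum_le_sum_abs _ _
      _ ≤ ∑ j, γ * |v j| := Finset.sum_le_sum fun j _ => by
          rw [abs_mul]; exact mul_le_mul_of_nonneg_right (hM i j) (abs_nonneg _)
  calc ∑ i, |M.mulVec v i| ≤ ∑ _i : Fin m, ∑ j, γ * |v j| :=
        Finset.sum_le_sum fun i _ => h1 i
    _ = (m : ℝ) * γ * ∑ j, |v j| := by
        rw [Finset.sum_const, Finset.card_univ, Fintype.card_fin, nsmul_eq_mul,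
          ← Finset.mul_sum]; ring

lemma rnn_hidden_bound
    (n d : ℕ) (α β : ℝ) (hα : 0 ≤ α) (hβ : 0 < β)
    (φ : ℝ → ℝ) (Kφ : ℝ) (hφ : ∀ s t : ℝ, |φ s - φ t| ≤ Kφ * |s - t|)
    (ε γbar Rr Rx : ℝ) (hε : 0 < ε)
    (hγbar : 0 < γbar) (hRr : 0 < Rr) (hRx : 0 < Rx)
    (W W' : Matrix (Fin n) (Fin n) ℝ) (B B' : Matrix (Fin n) (Fin d) ℝ) (b b' : Fin n → ℝ)
    (hW'bd : ∀ i j, |W' i j| ≤ γbar)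
    (hW : ∀ i j, |W' i j - W i j| < ε)
    (hB : ∀ i q, |B' i q - B i q| < ε)
    (hb : ∀ i, |b' i - b i| < ε)
    (T : ℕ)
    (x : ℕ → Fin d → ℝ) (hx : ∀ t < T, ∑ q, |x t q| ≤ Rx)
    (r0 : Fin n → ℝ)
    (hr : ∀ t ≤ T, ∑ i, |rnnTrajP φ α β W B b x r0 t i| ≤ Rr) :
    ∀ t ≤ T, ∑ i, |rnnTrajP φ α β W' B' b' x r0 t i - rnnTrajP φ α β W B b x r0 t i|
      ≤ ((n : ℝ) * β * Kφ * (Rx + Rr + 1) * ε) *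
          ∑ j ∈ Finset.range t, (α + β * Kφ * n * γbar) ^ j := by
  have hKφ : 0 ≤ Kφ := by
    have h := hφ 0 1
    have h2 := abs_nonneg (φ 0 - φ 1)
    simp at h; linarith
  set ρ : ℝ := α + β * Kφ * n * γbar with hρdef
  have hρ : 0 ≤ ρ := by
    have : (0:ℝ) ≤ β * Kφ * n * γbar := by positivity
    simp [hρdef]; linarith
  set c : ℝ := (n : ℝ) * β * Kφ * (Rx + Rr + 1) * ε with hcdef
  have hc : 0 ≤ c := by positivity
  intro t
  induction t with
  | zero => intro _; simp [rnnTrajP]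
  | succ t ih =>
    intro ht
    have htT : t < T := Nat.lt_of_succ_le ht
    have hδ := ih htT.le
    set r : ℕ → Fin n → ℝ := rnnTrajP φ α β W B b x r0 with hrdef
    set r' : ℕ → Fin n → ℝ := rnnTrajP φ α β W' B' b' x r0 with hr'def
    set A : Fin n → ℝ := fun i => W.mulVec (r t) i + B.mulVec (x t) i + b i with hA
    set A' : Fin n → ℝ := fun i => W'.mulVec (r' t) i + B'.mulVec (x t) i + b' i with hA'
    have hpt : ∀ i, |r' (t+1) i - r (t+1) i|
        ≤ α * |r' t i - r t i| + β * Kφ * |A' i - A i| := by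
      intro i
      have e : r' (t+1) i - r (t+1) i
          = -α * (r' t i - r t i) + β * (φ (A' i) - φ (A i)) := by
        simp only [hrdef, hr'def, hA, hA', rnnTrajP]; ring
      rw [e]
      calc |(-α) * (r' t i - r t i) + β * (φ (A' i) - φ (A i))|
          ≤ |(-α) * (r' t i - r t i)| + |β * (φ (A' i) - φ (A i))| := abs_add_le _ _
        _ = α * |r' t i - r t i| + β * |φ (A' i) - φ (A i)| := by
            rw [abs_mul, abs_mul, abs_neg, abs_of_nonneg hα, abs_of_pos hβ]
        _ ≤ α * |r' t i - r t i| + β * (Kφ * |A' i - A i|) := by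
            have := hφ (A' i) (A i)
            nlinarith
        _ = α * |r' t i - r t i| + β * Kφ * |A' i - A i| := by ring
    -- bound on ∑ |A' - A|
    have hAA : ∀ i, A' i - A i
        = W'.mulVec (r' t - r t) i + (W' - W).mulVec (r t) i
          + (B' - B).mulVec (x t) i + (b' i - b i) := by
      intro i
      simp only [hA, hA', Matrix.mulVec_sub, Matrix.sub_mulVec, Pi.sub_apply]
      ring
    have h1 : ∑ i, |W'.mulVec (r' t - r t) i| ≤ (n:ℝ) * γbar * ∑ i, |r' t i - r t i| := by
      have := sum_abs_mulVec_le W' (r' t - r t) γbar hW'bd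
      simpa [Pi.sub_apply] using this
    have h2 : ∑ i, |(W' - W).mulVec (r t) i| ≤ (n:ℝ) * ε * Rr := by
      calc ∑ i, |(W' - W).mulVec (r t) i| ≤ (n:ℝ) * ε * ∑ i, |r t i| :=
            sum_abs_mulVec_le _ _ ε (fun i j => by
              simpa [Matrix.sub_apply] using (hW i j).le)
        _ ≤ (n:ℝ) * ε * Rr := by
            have := hr t htT.le
            have hnε : 0 ≤ (n:ℝ) * ε := by positivity
            exact mul_le_mul_of_nonneg_left this hnε
    have h3 : ∑ i, |(B' - B).mulVec (x t) i| ≤ (n:ℝ) * ε * Rx := by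
      calc ∑ i, |(B' - B).mulVec (x t) i| ≤ (n:ℝ) * ε * ∑ q, |x t q| :=
            sum_abs_mulVec_le _ _ ε (fun i q => by
              simpa [Matrix.sub_apply] using (hB i q).le)
        _ ≤ (n:ℝ) * ε * Rx := by
            have := hx t htT
            have hnε : 0 ≤ (n:ℝ) * ε := by positivity
            exact mul_le_mul_of_nonneg_left this hnε
    have h4 : ∑ i, |b' i - b i| ≤ (n:ℝ) * ε := by
      calc ∑ i, |b' i - b i| ≤ ∑ _i : Fin n, ε :=
            Finset.sum_le_sum fun i _ => (hb i).le
        _ = (n:ℝ) * ε := by simp [Finset.sum_const, nsmul_eq_mul]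
    have hAsum : ∑ i, |A' i - A i|
        ≤ (n:ℝ) * γbar * ∑ i, |r' t i - r t i| + (n:ℝ) * ε * (Rx + Rr + 1) := by
      calc ∑ i, |A' i - A i|
          ≤ ∑ i, (|W'.mulVec (r' t - r t) i| + |(W' - W).mulVec (r t) i|
              + |(B' - B).mulVec (x t) i| + |b' i - b i|) := by
            refine Finset.sum_le_sum fun i _ => ?_
            rw [hAA i]
            calc |W'.mulVec (r' t - r t) i + (W' - W).mulVec (r t) i
                  + (B' - B).mulVec (x t) i + (b' i - b i)|
                ≤ |W'.mulVec (r' t - r t) i + (W' - W).mulVec (r t) i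
                  + (B' - B).mulVec (x t) i| + |b' i - b i| := abs_add_le _ _
              _ ≤ (|W'.mulVec (r' t - r t) i + (W' - W).mulVec (r t) i|
                  + |(B' - B).mulVec (x t) i|) + |b' i - b i| := by
                    have := abs_add_le (W'.mulVec (r' t - r t) i + (W' - W).mulVec (r t) i)
                      ((B' - B).mulVec (x t) i)
                    linarith
              _ ≤ |W'.mulVec (r' t - r t) i| + |(W' - W).mulVec (r t) i|
                  + |(B' - B).mulVec (x t) i| + |b' i - b i| := by
                    have := abs_add_le (W'.mulVec (r' t - r t) i) ((W' - W).mulVec (r t) i)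
                    linarith
        _ = (∑ i, |W'.mulVec (r' t - r t) i|) + (∑ i, |(W' - W).mulVec (r t) i|)
            + (∑ i, |(B' - B).mulVec (x t) i|) + ∑ i, |b' i - b i| := by
            simp [Finset.sum_add_distrib]
        _ ≤ (n:ℝ) * γbar * ∑ i, |r' t i - r t i| + (n:ℝ) * ε * Rr
            + (n:ℝ) * ε * Rx + (n:ℝ) * ε := by linarith
        _ = (n:ℝ) * γbar * ∑ i, |r' t i - r t i| + (n:ℝ) * ε * (Rx + Rr + 1) := by ring
    -- combine
    have hstep : ∑ i, |r' (t+1) i - r (t+1) i|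
        ≤ ρ * ∑ i, |r' t i - r t i| + c := by
      calc ∑ i, |r' (t+1) i - r (t+1) i|
          ≤ ∑ i, (α * |r' t i - r t i| + β * Kφ * |A' i - A i|) :=
            Finset.sum_le_sum fun i _ => hpt i
        _ = α * (∑ i, |r' t i - r t i|) + β * Kφ * ∑ i, |A' i - A i| := by
            simp [Finset.sum_add_distrib, Finset.mul_sum]
        _ ≤ α * (∑ i, |r' t i - r t i|)
            + β * Kφ * ((n:ℝ) * γbar * ∑ i, |r' t i - r t i|
                + (n:ℝ) * ε * (Rx + Rr + 1)) := by
            have hβK : 0 ≤ β * Kφ := by positivity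
            nlinarith [mul_le_mul_of_nonneg_left hAsum hβK]
        _ = ρ * ∑ i, |r' t i - r t i| + c := by
            simp only [hρdef, hcdef]; ring
    have hSnn : 0 ≤ ∑ j ∈ Finset.range t, ρ ^ j :=
      Finset.sum_nonneg fun j _ => pow_nonneg hρ j
    calc ∑ i, |r' (t+1) i - r (t+1) i| ≤ ρ * ∑ i, |r' t i - r t i| + c := hstep
      _ ≤ ρ * (c * ∑ j ∈ Finset.range t, ρ ^ j) + c := by
          nlinarith [mul_le_mul_of_nonneg_left hδ hρ]
      _ = c * ∑ j ∈ Finset.range (t+1), ρ ^ j := by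
          rw [geom_sum_succ]; ring

/-- Output perturbation bound for recurrent networks: under the hypotheses of the
hidden-state perturbation bound, if additionally the perturbed output weights are bounded
by `γ̄` and within `ε` of the reference output weights, and the reference hidden states
have ℓ¹ norm at most `R_r` up to time `T`, then the total ℓ¹ output error over times
`1, …, T` is at most
`l·T·(γ̄·n·β·K_φ·R̃·Σ_{j=0}^{T-1}(α + β·K_φ·n·γ̄)^j + R_r)·ε` with `R̃ = R_x + R_r + 1`. -/
theorem rnn_output_perturbation_bound
    (n d l : ℕ) (hn : 1 ≤ n) (hd : 1 ≤ d) (hl : 1 ≤ l)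
    (α β : ℝ) (hα : 0 ≤ α) (hβ : 0 < β)
    (φ : ℝ → ℝ) (Kφ : ℝ) (hφ : ∀ s t : ℝ, |φ s - φ t| ≤ Kφ * |s - t|)
    (ε γbar Rr Rx : ℝ) (hε : 0 < ε) (hε1 : ε ≤ 1)
    (hγbar : 0 < γbar) (hRr : 0 < Rr) (hRx : 0 < Rx)
    (W W' : Matrix (Fin n) (Fin n) ℝ) (B B' : Matrix (Fin n) (Fin d) ℝ) (b b' : Fin n → ℝ)
    (C C' : Matrix (Fin l) (Fin n) ℝ)
    (hW'bd : ∀ i j, |W' i j| ≤ γbar)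
    (hW : ∀ i j, |W' i j - W i j| < ε)
    (hB : ∀ i q, |B' i q - B i q| < ε)
    (hb : ∀ i, |b' i - b i| < ε)
    (hC'bd : ∀ p i, |C' p i| ≤ γbar)
    (hC : ∀ p i, |C' p i - C p i| < ε)
    (T : ℕ) (hT : 1 ≤ T)
    (x : ℕ → Fin d → ℝ) (hx : ∀ t < T, ∑ q, |x t q| ≤ Rx)
    (r0 : Fin n → ℝ)
    (hr : ∀ t ≤ T, ∑ i, |rnnTrajP φ α β W B b x r0 t i| ≤ Rr) :
    ∑ t ∈ Finset.Icc 1 T,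
        (∑ p, |C'.mulVec (rnnTrajP φ α β W' B' b' x r0 t) p
                - C.mulVec (rnnTrajP φ α β W B b x r0 t) p|)
      ≤ (l : ℝ) * T *
          (γbar * n * β * Kφ * (Rx + Rr + 1)
              * (∑ j ∈ Finset.range T, (α + β * Kφ * n * γbar) ^ j) + Rr) * ε := by
  have hKφ : 0 ≤ Kφ := by
    have h := hφ 0 1
    have h2 := abs_nonneg (φ 0 - φ 1)
    simp at h; linarith
  set ρ : ℝ := α + β * Kφ * n * γbar with hρdef
  have hρ : 0 ≤ ρ := by
    have : (0:ℝ) ≤ β * Kφ * n * γbar := by positivity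
    simp only [hρdef]; linarith
  set c : ℝ := (n : ℝ) * β * Kφ * (Rx + Rr + 1) * ε with hcdef
  have hc : 0 ≤ c := by positivity
  set S : ℝ := ∑ j ∈ Finset.range T, ρ ^ j with hSdef
  have hS : 0 ≤ S := Finset.sum_nonneg fun j _ => pow_nonneg hρ j
  have key := rnn_hidden_bound n d α β hα hβ φ Kφ hφ ε γbar Rr Rx hε hγbar hRr hRx
    W W' B B' b b' hW'bd hW hB hb T x hx r0 hr
  set r : ℕ → Fin n → ℝ := rnnTrajP φ α β W B b x r0 with hrdef
  set r' : ℕ → Fin n → ℝ := rnnTrajP φ α β W' B' b' x r0 with hr'def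
  have hterm : ∀ t ∈ Finset.Icc 1 T,
      (∑ p, |C'.mulVec (r' t) p - C.mulVec (r t) p|)
        ≤ (l : ℝ) * (γbar * n * β * Kφ * (Rx + Rr + 1) * S + Rr) * ε := by
    intro t htmem
    obtain ⟨ht1, ht2⟩ := Finset.mem_Icc.mp htmem
    have hδ : ∑ i, |r' t i - r t i| ≤ c * S := by
      refine (key t ht2).trans ?_
      refine mul_le_mul_of_nonneg_left ?_ hc
      exact Finset.sum_le_sum_of_subset_of_nonneg
        (Finset.range_subset_range.mpr ht2) (fun j _ _ => pow_nonneg hρ j)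
    have hsplit : ∀ p, C'.mulVec (r' t) p - C.mulVec (r t) p
        = C'.mulVec (r' t - r t) p + (C' - C).mulVec (r t) p := by
      intro p
      simp only [Matrix.mulVec_sub, Matrix.sub_mulVec, Pi.sub_apply]
      ring
    have h1 : ∑ p, |C'.mulVec (r' t - r t) p| ≤ (l:ℝ) * γbar * ∑ i, |r' t i - r t i| := by
      have := sum_abs_mulVec_le C' (r' t - r t) γbar hC'bd
      simpa [Pi.sub_apply] using this
    have h2 : ∑ p, |(C' - C).mulVec (r t) p| ≤ (l:ℝ) * ε * Rr := by
      calc ∑ p, |(C' - C).mulVec (r t) p| ≤ (l:ℝ) * ε * ∑ i, |r t i| :=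
            sum_abs_mulVec_le _ _ ε (fun p i => by
              simpa [Matrix.sub_apply] using (hC p i).le)
        _ ≤ (l:ℝ) * ε * Rr := by
            have hlε : 0 ≤ (l:ℝ) * ε := by positivity
            exact mul_le_mul_of_nonneg_left (hr t ht2) hlε
    calc ∑ p, |C'.mulVec (r' t) p - C.mulVec (r t) p|
        ≤ ∑ p, (|C'.mulVec (r' t - r t) p| + |(C' - C).mulVec (r t) p|) := by
          refine Finset.sum_le_sum fun p _ => ?_
          rw [hsplit p]; exact abs_add_le _ _
      _ = (∑ p, |C'.mulVec (r' t - r t) p|) + ∑ p, |(C' - C).mulVec (r t) p| := by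
          simp [Finset.sum_add_distrib]
      _ ≤ (l:ℝ) * γbar * (c * S) + (l:ℝ) * ε * Rr := by
          have hlγ : 0 ≤ (l:ℝ) * γbar := by positivity
          nlinarith [mul_le_mul_of_nonneg_left hδ hlγ]
      _ = (l : ℝ) * (γbar * n * β * Kφ * (Rx + Rr + 1) * S + Rr) * ε := by
          simp only [hcdef]; ring
  calc ∑ t ∈ Finset.Icc 1 T, (∑ p, |C'.mulVec (r' t) p - C.mulVec (r t) p|)
      ≤ ∑ _t ∈ Finset.Icc 1 T,
          (l : ℝ) * (γbar * n * β * Kφ * (Rx + Rr + 1) * S + Rr) * ε :=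
        Finset.sum_le_sum hterm
    _ = (l : ℝ) * T * (γbar * n * β * Kφ * (Rx + Rr + 1) * S + Rr) * ε := by
        rw [Finset.sum_const, Nat.card_Icc, nsmul_eq_mul]
        have : (T + 1 - 1 : ℕ) = T := by omega
        rw [this]; ring
end
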